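/- arXiv:1803.09871 — 4 statements merged into one kernel-verified Lean document; each statement's English description precedes it below -/
import Mathlib

section
/- Let π' be an arbitrary probability distribution on 𝕏. For every distortion level D > 0, the operational rate-distortion function under the expected distortion criterion of the Markov source X_{[π',P]} equals that of the Markov source started in the stationary distribution: R^E_{X_{[π',P]}}(D) = R^E_{X_{[π,P]}}(D). -/
open Filter Finset

/-- `μ` is a probability distribution on the finite set `𝕏`. -/
def IsProbDist {𝕏 : Type} [Fintype 𝕏] (μ : 𝕏 → ℝ) : Prop :=
  (∀ x, 0 ≤ μ x) ∧ ∑ x, μ x = 1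

/-- `P` is a stochastic (transition probability) matrix on `𝕏`. -/
def IsStochastic {𝕏 : Type} [Fintype 𝕏] (P : 𝕏 → 𝕏 → ℝ) : Prop :=
  (∀ x y, 0 ≤ P x y) ∧ ∀ x, ∑ y, P x y = 1

/-- `n`-th power of the transition matrix `P`. -/
def matPow {𝕏 : Type} [Fintype 𝕏] [DecidableEq 𝕏] (P : 𝕏 → 𝕏 → ℝ) : ℕ → 𝕏 → 𝕏 → ℝ
  | 0 => fun x y => if x = y then 1 else 0
  | n + 1 => fun x y => ∑ z, matPow P n x z * P z y

/-- Irreducible and aperiodic chain on a finite state space, i.e. primitive transition matrix: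
some power of `P` has all entries strictly positive. -/
def IsIrreducibleAperiodic {𝕏 : Type} [Fintype 𝕏] [DecidableEq 𝕏] (P : 𝕏 → 𝕏 → ℝ) : Prop :=
  ∃ m : ℕ, 0 < m ∧ ∀ x y, 0 < matPow P m x y

/-- `π` is a stationary distribution of `P`. -/
def IsStationaryDist {𝕏 : Type} [Fintype 𝕏] (P : 𝕏 → 𝕏 → ℝ) (π : 𝕏 → ℝ) : Prop :=
  ∀ y, ∑ x, π x * P x y = π y

/-- Law of the first `n` states of the Markov chain with initial distribution `π'`
and transition matrix `P`. -/
def markovLaw {𝕏 : Type} (π' : 𝕏 → ℝ) (P : 𝕏 → 𝕏 → ℝ) : ∀ n : ℕ, (Fin n → 𝕏) → ℝ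
  | 0, _ => 1
  | n + 1, x => π' (x 0) * ∏ i : Fin n, P (x i.castSucc) (x i.succ)

/-- Distribution of `X_{n+1}` when `X_1 ~ μ` (i.e. `μ Pⁿ`). -/
def stepDist {𝕏 : Type} [Fintype 𝕏] [DecidableEq 𝕏] (μ : 𝕏 → ℝ) (P : 𝕏 → 𝕏 → ℝ)
    (n : ℕ) : 𝕏 → ℝ :=
  fun y => ∑ x, μ x * matPow P n x y

/-- Law of `n` i.i.d. blocks, each distributed according to `q`. -/
def iidLaw {S : Type} [Fintype S] (q : S → ℝ) (n : ℕ) (x : Fin n → S) : ℝ := ∏ i, q (x i)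

/-- Additive block distortion built from the single-letter distortion `d`. -/
def blockDist {𝕏 𝕐 : Type} (d : 𝕏 → 𝕐 → ℝ) (T : ℕ) (s : Fin T → 𝕏) (t : Fin T → 𝕐) : ℝ :=
  ∑ j, d (s j) (t j)

/-- Marginal of the distribution `q` on `𝕏^T` on the last `T - τ` coordinates
(the projection `J_τ`). -/
noncomputable def projDist {𝕏 : Type} [Fintype 𝕏] [DecidableEq 𝕏] {T : ℕ}
    (q : (Fin T → 𝕏) → ℝ) (τ : ℕ) : (Fin (T - τ) → 𝕏) → ℝ :=
  fun r => ∑ s : Fin T → 𝕏,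
    if (∀ i : Fin (T - τ), s ⟨τ + i.val, by have := i.isLt; omega⟩ = r i) then q s else 0

/-- Maximal value of the single-letter distortion measure. -/
noncomputable def Dmax {𝕏 𝕐 : Type} [Fintype 𝕏] [Fintype 𝕐] (d : 𝕏 → 𝕐 → ℝ) : ℝ :=
  ⨆ p : 𝕏 × 𝕐, d p.1 p.2

/-- Minimal strictly positive value of the single-letter distortion measure. -/
noncomputable def Dmin {𝕏 𝕐 : Type} [Fintype 𝕏] [Fintype 𝕐] (d : 𝕏 → 𝕐 → ℝ) : ℝ :=
  ⨅ p : {p : 𝕏 × 𝕐 // 0 < d p.1 p.2}, d p.1.1 p.1.2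

/-- Operational rate-distortion function under the expected distortion criterion, for the
source whose first `n` letters have law `law n` and with single-letter distortion `ρ`:
the infimum of all rates `R` for which there is a sequence of rate-`R` codes
`⟨eⁿ, fⁿ⟩` (with codebook size `2^⌊nR⌋`) whose expected normalized `n`-letter distortion
has `limsup` at most `D`. -/
noncomputable def RDE {S T : Type} [Fintype S]
    (law : ∀ n : ℕ, (Fin n → S) → ℝ) (ρ : S → T → ℝ) (D : ℝ) : ℝ :=
  sInf {R : ℝ |
    ∃ enc : ∀ n : ℕ, (Fin n → S) → Fin (2 ^ ⌊(n : ℝ) * R⌋₊),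
    ∃ dec : ∀ n : ℕ, Fin (2 ^ ⌊(n : ℝ) * R⌋₊) → (Fin n → T),
      Filter.limsup (fun n : ℕ =>
        ∑ x : Fin n → S, law n x * ((n : ℝ)⁻¹ *
          ∑ i, ρ (x i) (dec n (enc n x) i))) Filter.atTop ≤ D}

/-- Operational rate-distortion function of the Markov source `X_{[π',P]}`. -/
noncomputable def markovRDE {𝕏 : Type} [Fintype 𝕏]
    (π' : 𝕏 → ℝ) (P : 𝕏 → 𝕏 → ℝ) (d : 𝕏 → 𝕏 → ℝ) (D : ℝ) : ℝ :=
  RDE (markovLaw π' P) d D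

/-- Operational rate-distortion function of the block-independent approximation
(BIA) `X^T_{[π',P]}` source. -/
noncomputable def biaRDE {𝕏 : Type} [Fintype 𝕏]
    (π' : 𝕏 → ℝ) (P : 𝕏 → 𝕏 → ℝ) (d : 𝕏 → 𝕏 → ℝ) (T : ℕ) (Δ : ℝ) : ℝ :=
  RDE (iidLaw (markovLaw π' P T)) (blockDist d T) Δ

/-- Operational rate-distortion function of the vector i.i.d. `J_τ(X^T_{[π',P]})` source. -/
noncomputable def projRDE {𝕏 : Type} [Fintype 𝕏] [DecidableEq 𝕏]
    (π' : 𝕏 → ℝ) (P : 𝕏 → 𝕏 → ℝ) (d : 𝕏 → 𝕏 → ℝ) (T τ : ℕ) (Δ : ℝ) : ℝ :=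
  RDE (iidLaw (projDist (markovLaw π' P T) τ)) (blockDist d (T - τ)) Δ

/-- `δ^{(τ)}`: the `l¹` distance between the distribution of `X_{τ+1}` under `X_{[π',P]}`
and the stationary distribution `π`. -/
def l1dev {𝕏 : Type} [Fintype 𝕏] [DecidableEq 𝕏]
    (π' : 𝕏 → ℝ) (P : 𝕏 → 𝕏 → ℝ) (π : 𝕏 → ℝ) (τ : ℕ) : ℝ :=
  ∑ x, |stepDist π' P τ x - π x|
set_option linter.unusedSectionVars false
section AuxA

variable {𝕏 : Type} [Fintype 𝕏] [DecidableEq 𝕏]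

lemma matPow_nonneg {P : 𝕏 → 𝕏 → ℝ} (hP : IsStochastic P) : ∀ t x y, 0 ≤ matPow P t x y := by
  intro t
  induction t with
  | zero => intro x y; dsimp [matPow]; split <;> norm_num
  | succ t ih => intro x y; exact Finset.sum_nonneg fun z _ => mul_nonneg (ih x z) (hP.1 z y)

lemma matPow_rowsum {P : 𝕏 → 𝕏 → ℝ} (hP : IsStochastic P) : ∀ t x, ∑ y, matPow P t x y = 1 := by
  intro t
  induction t with
  | zero =>
      intro x
      show ∑ y, (if x = y then (1:ℝ) else 0) = 1
      simp
  | succ t ih =>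
      intro x
      show ∑ y, ∑ z, matPow P t x z * P z y = 1
      rw [Finset.sum_comm]
      simp_rw [← Finset.mul_sum]
      simp [ih, hP.2]

lemma matPow_succ_left {P : 𝕏 → 𝕏 → ℝ} : ∀ t x y,
    matPow P (t+1) x y = ∑ z, P x z * matPow P t z y := by
  intro t
  induction t with
  | zero => intro x y; simp [matPow]
  | succ t ih =>
      intro x y
      calc matPow P (t+1+1) x y = ∑ w, matPow P (t+1) x w * P w y := rfl
        _ = ∑ w, ∑ z, P x z * matPow P t z w * P w y := by simp_rw [ih, Finset.sum_mul]
        _ = ∑ z, ∑ w, P x z * (matPow P t z w * P w y) := by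
              rw [Finset.sum_comm]; simp_rw [mul_assoc]
        _ = ∑ z, P x z * matPow P (t+1) z y := by simp_rw [← Finset.mul_sum]; rfl

lemma stepDist_zero (μ : 𝕏 → ℝ) (P : 𝕏 → 𝕏 → ℝ) : stepDist μ P 0 = μ := by
  funext y
  show ∑ x, μ x * (if x = y then (1:ℝ) else 0) = μ y
  simp

lemma stepDist_succ (μ : 𝕏 → ℝ) (P : 𝕏 → 𝕏 → ℝ) (t : ℕ) (y : 𝕏) :
    stepDist μ P (t+1) y = ∑ z, stepDist μ P t z * P z y := by
  show ∑ x, μ x * ∑ z, matPow P t x z * P z y = _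
  calc ∑ x, μ x * ∑ z, matPow P t x z * P z y
      = ∑ x, ∑ z, μ x * matPow P t x z * P z y := by simp_rw [Finset.mul_sum, mul_assoc]
    _ = ∑ z, ∑ x, μ x * matPow P t x z * P z y := Finset.sum_comm
    _ = ∑ z, stepDist μ P t z * P z y := by simp_rw [stepDist, Finset.sum_mul]

lemma stepDist_succ_left (μ : 𝕏 → ℝ) (P : 𝕏 → 𝕏 → ℝ) (t : ℕ) (z : 𝕏) :
    stepDist μ P (t+1) z = ∑ a, μ a * stepDist (fun b => P a b) P t z := by
  show ∑ x, μ x * matPow P (t+1) x z = _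
  simp_rw [matPow_succ_left, Finset.mul_sum]
  refine Finset.sum_congr rfl fun a _ => ?_
  rw [stepDist, Finset.mul_sum]

lemma stepDist_add (μ : 𝕏 → ℝ) (P : 𝕏 → 𝕏 → ℝ) (s t : ℕ) (y : 𝕏) :
    stepDist μ P (s + t) y = ∑ x, stepDist μ P s x * matPow P t x y := by
  induction t generalizing y with
  | zero =>
      show stepDist μ P s y = ∑ x, stepDist μ P s x * (if x = y then (1:ℝ) else 0)
      simp
  | succ t ih =>
      calc stepDist μ P (s+t+1) y = ∑ z, stepDist μ P (s+t) z * P z y := stepDist_succ ..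
        _ = ∑ z, (∑ x, stepDist μ P s x * matPow P t x z) * P z y := by simp_rw [ih]
        _ = ∑ z, ∑ x, stepDist μ P s x * (matPow P t x z * P z y) := by
              simp_rw [Finset.sum_mul, mul_assoc]
        _ = ∑ x, ∑ z, stepDist μ P s x * (matPow P t x z * P z y) := Finset.sum_comm
        _ = ∑ x, stepDist μ P s x * matPow P (t+1) x y := by simp_rw [← Finset.mul_sum]; rfl

lemma stepDist_nonneg {μ : 𝕏 → ℝ} {P : 𝕏 → 𝕏 → ℝ} (hμ : ∀ x, 0 ≤ μ x) (hP : IsStochastic P)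
    (t : ℕ) (y : 𝕏) : 0 ≤ stepDist μ P t y :=
  Finset.sum_nonneg fun x _ => mul_nonneg (hμ x) (matPow_nonneg hP t x y)

lemma stepDist_mass {μ : 𝕏 → ℝ} {P : 𝕏 → 𝕏 → ℝ} (hP : IsStochastic P) (t : ℕ) :
    ∑ y, stepDist μ P t y = ∑ x, μ x := by
  show ∑ y, ∑ x, μ x * matPow P t x y = _
  rw [Finset.sum_comm]
  simp_rw [← Finset.mul_sum, matPow_rowsum hP, mul_one]

lemma markovLaw_succ {P : 𝕏 → 𝕏 → ℝ} (ν : 𝕏 → ℝ) (n : ℕ) (x : Fin (n+1) → 𝕏) :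
    markovLaw ν P (n+1) x = ν (x 0) * markovLaw (fun b => P (x 0) b) P n (fun i => x i.succ) := by
  cases n with
  | zero => simp [markovLaw]
  | succ k =>
      show ν (x 0) * ∏ i : Fin (k+1), P (x i.castSucc) (x i.succ)
        = ν (x 0) * (P (x 0) (x (0 : Fin (k+1)).succ) *
            ∏ i : Fin k, P (x i.castSucc.succ) (x i.succ.succ))
      rw [Fin.prod_univ_succ]
      simp [Fin.succ_castSucc, -Fin.castSucc_succ]

lemma sum_cons_decomp (n : ℕ) (F : (Fin (n+1) → 𝕏) → ℝ) :
    ∑ x : Fin (n+1) → 𝕏, F x = ∑ a : 𝕏, ∑ y : Fin n → 𝕏, F (Fin.cons a y) := by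
  rw [← Equiv.sum_comp (Fin.consEquiv fun _ => 𝕏) F, Fintype.sum_prod_type]
  rfl

lemma markovLaw_mass {P : 𝕏 → 𝕏 → ℝ} (hP : IsStochastic P) : ∀ (n : ℕ) (ν : 𝕏 → ℝ),
    ∑ x : Fin (n+1) → 𝕏, markovLaw ν P (n+1) x = ∑ a, ν a := by
  intro n
  induction n with
  | zero =>
      intro ν
      rw [sum_cons_decomp]
      simp [markovLaw]
  | succ k ih =>
      intro ν
      rw [sum_cons_decomp]
      have h : ∀ (a : 𝕏) (y : Fin (k+1) → 𝕏),
          markovLaw ν P (k+2) (Fin.cons a y) = ν a * markovLaw (fun b => P a b) P (k+1) y := by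
        intro a y
        rw [markovLaw_succ]
        simp
      simp_rw [h, ← Finset.mul_sum, ih, hP.2, mul_one]

lemma markovLaw_nonneg {P : 𝕏 → 𝕏 → ℝ} {ν : 𝕏 → ℝ} (hν : ∀ x, 0 ≤ ν x) (hP : IsStochastic P)
    (n : ℕ) (x : Fin n → 𝕏) : 0 ≤ markovLaw ν P n x := by
  cases n with
  | zero => norm_num [markovLaw]
  | succ k => exact mul_nonneg (hν _) (Finset.prod_nonneg fun i _ => hP.1 _ _)

lemma markov_head {P : 𝕏 → 𝕏 → ℝ} (hP : IsStochastic P) (m : ℕ) (γ f : 𝕏 → ℝ) :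
    ∑ z : Fin (m+1) → 𝕏, markovLaw γ P (m+1) z * f (z 0) = ∑ a, γ a * f a := by
  rw [sum_cons_decomp]
  have h : ∀ (a : 𝕏) (y : Fin m → 𝕏),
      markovLaw γ P (m+1) (Fin.cons a y) * f ((Fin.cons a y : Fin (m+1) → 𝕏) 0)
        = γ a * markovLaw (fun b => P a b) P m y * f a := by
    intro a y
    rw [markovLaw_succ]
    simp
  simp_rw [h]
  cases m with
  | zero =>
      simp [markovLaw]
  | succ k =>
      refine Finset.sum_congr rfl fun a _ => ?_
      calc ∑ y : Fin (k+1) → 𝕏, γ a * markovLaw (fun b => P a b) P (k+1) y * f a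
          = γ a * f a * ∑ y : Fin (k+1) → 𝕏, markovLaw (fun b => P a b) P (k+1) y := by
            rw [Finset.mul_sum]; exact Finset.sum_congr rfl fun y _ => by ring
        _ = γ a * f a := by rw [markovLaw_mass hP, hP.2, mul_one]

lemma markov_marginal {P : 𝕏 → 𝕏 → ℝ} (hP : IsStochastic P) :
    ∀ (τ : ℕ) (ν : 𝕏 → ℝ), (∑ a, ν a = 1) → ∀ (n m : ℕ) (hn : n = τ + m)
    (h : (Fin m → 𝕏) → ℝ),
    ∑ x : Fin n → 𝕏, markovLaw ν P n x * h (fun i => x ⟨τ + i.1, by omega⟩)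
      = ∑ z : Fin m → 𝕏, markovLaw (stepDist ν P τ) P m z * h z := by
  intro τ
  induction τ with
  | zero =>
      intro ν hν n m hn h
      have hm : n = m := by omega
      subst hm
      rw [stepDist_zero]
      refine Finset.sum_congr rfl fun x _ => ?_
      congr 1
      congr 1
      funext i
      congr 1
      exact Fin.ext (by simp)
  | succ τ ih =>
      intro ν hν n m hn h
      have hm : n = (τ + m) + 1 := by omega
      subst hm
      rw [sum_cons_decomp]
      have key : ∀ (a : 𝕏) (y : Fin (τ + m) → 𝕏),
          markovLaw ν P (τ+m+1) (Fin.cons a y)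
              * h (fun i => (Fin.cons a y : Fin (τ+m+1) → 𝕏) ⟨τ + 1 + i.1, by omega⟩)
          = ν a * (markovLaw (fun b => P a b) P (τ+m) y * h (fun i => y ⟨τ + i.1, by omega⟩)) := by
        intro a y
        rw [markovLaw_succ]
        have h2 : (fun i : Fin m => (Fin.cons a y : Fin (τ+m+1) → 𝕏) ⟨τ + 1 + i.1, by omega⟩)
            = fun i : Fin m => y ⟨τ + i.1, by omega⟩ := by
          funext i
          have h3 : (⟨τ + 1 + i.1, by omega⟩ : Fin (τ+m+1))
              = (⟨τ + i.1, by omega⟩ : Fin (τ+m)).succ := by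
            apply Fin.ext
            simp only [Fin.val_succ]
            omega
          rw [h3, Fin.cons_succ]
        rw [h2]
        simp [mul_assoc]
      simp_rw [key, ← Finset.mul_sum]
      have step : ∀ a : 𝕏,
          ∑ y : Fin (τ+m) → 𝕏, markovLaw (fun b => P a b) P (τ+m) y
              * h (fun i => y ⟨τ + i.1, by omega⟩)
          = ∑ z : Fin m → 𝕏, markovLaw (stepDist (fun b => P a b) P τ) P m z * h z :=
        fun a => ih (fun b => P a b) (hP.2 a) (τ+m) m rfl h
      simp_rw [step, Finset.mul_sum]
      rw [Finset.sum_comm]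
      refine Finset.sum_congr rfl fun z _ => ?_
      cases m with
      | zero =>
          show ∑ a, ν a * ((1:ℝ) * h z) = (1:ℝ) * h z
          simp [← Finset.sum_mul, hν]
      | succ k =>
          have unf : ∀ γ : 𝕏 → ℝ, markovLaw γ P (k+1) z
              = γ (z 0) * ∏ i : Fin k, P (z i.castSucc) (z i.succ) := fun γ => rfl
          simp_rw [unf]
          rw [stepDist_succ_left, Finset.sum_mul, Finset.sum_mul]
          exact Finset.sum_congr rfl fun a _ => by ring

lemma markovLaw_l1 {P : 𝕏 → 𝕏 → ℝ} (hP : IsStochastic P) (m : ℕ) (α β : 𝕏 → ℝ) :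
    ∑ z : Fin (m+1) → 𝕏, |markovLaw α P (m+1) z - markovLaw β P (m+1) z|
      = ∑ x, |α x - β x| := by
  have h : ∀ z : Fin (m+1) → 𝕏,
      |markovLaw α P (m+1) z - markovLaw β P (m+1) z|
        = markovLaw (fun x => |α x - β x|) P (m+1) z := by
    intro z
    show |α (z 0) * ∏ i : Fin m, P (z i.castSucc) (z i.succ)
        - β (z 0) * ∏ i : Fin m, P (z i.castSucc) (z i.succ)| = |α (z 0) - β (z 0)| * _
    rw [← sub_mul, abs_mul,
      abs_of_nonneg (Finset.prod_nonneg fun i _ => hP.1 _ _)]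
  simp_rw [h]
  exact markovLaw_mass hP m _

end AuxA
section AuxB

variable {𝕏 : Type} [Fintype 𝕏] [DecidableEq 𝕏]

lemma l1_contract (Q : 𝕏 → 𝕏 → ℝ) (hQ1 : ∀ x, ∑ y, Q x y = 1)
    (c : ℝ) (hcQ : ∀ x y, c ≤ Q x y) (α β : 𝕏 → ℝ) (hab : ∑ x, α x = ∑ x, β x) :
    ∑ y, |∑ x, α x * Q x y - ∑ x, β x * Q x y|
      ≤ (1 - Fintype.card 𝕏 * c) * ∑ x, |α x - β x| := by
  have h0 : ∑ x, (α x - β x) * c = 0 := by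
    rw [← Finset.sum_mul, Finset.sum_sub_distrib, hab, sub_self, zero_mul]
  have h1 : ∀ y, ∑ x, α x * Q x y - ∑ x, β x * Q x y = ∑ x, (α x - β x) * (Q x y - c) := by
    intro y
    simp_rw [mul_sub]
    rw [Finset.sum_sub_distrib, h0, sub_zero, ← Finset.sum_sub_distrib]
    exact Finset.sum_congr rfl fun x _ => by ring
  calc ∑ y, |∑ x, α x * Q x y - ∑ x, β x * Q x y|
      ≤ ∑ y, ∑ x, |α x - β x| * (Q x y - c) := by
        refine Finset.sum_le_sum fun y _ => ?_
        rw [h1]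
        refine (Finset.abs_sum_le_sum_abs _ _).trans (Finset.sum_le_sum fun x _ => ?_)
        rw [abs_mul, abs_of_nonneg (sub_nonneg.2 (hcQ x y))]
    _ = ∑ x, |α x - β x| * (1 - Fintype.card 𝕏 * c) := by
        rw [Finset.sum_comm]
        refine Finset.sum_congr rfl fun x _ => ?_
        rw [← Finset.mul_sum]
        congr 1
        rw [Finset.sum_sub_distrib, hQ1, Finset.sum_const, Finset.card_univ, nsmul_eq_mul]
    _ = (1 - Fintype.card 𝕏 * c) * ∑ x, |α x - β x| := by
        rw [← Finset.sum_mul, mul_comm]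

lemma l1_le_two {α β : 𝕏 → ℝ} (hα : IsProbDist α) (hβ : IsProbDist β) :
    ∑ x, |α x - β x| ≤ 2 := by
  calc ∑ x, |α x - β x| ≤ ∑ x, (α x + β x) := by
        refine Finset.sum_le_sum fun x _ => abs_le.2 ⟨?_, ?_⟩
        · have := hα.1 x; have := hβ.1 x; linarith
        · have := hα.1 x; have := hβ.1 x; linarith
    _ = 2 := by rw [Finset.sum_add_distrib, hα.2, hβ.2]; norm_num

lemma mixing_main {P : 𝕏 → 𝕏 → ℝ} (hP : IsStochastic P) (hPia : IsIrreducibleAperiodic P)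
    (hne : Nonempty 𝕏) (μ ν : 𝕏 → ℝ) (hμ : IsProbDist μ) (hν : IsProbDist ν) :
    ∀ δ : ℝ, 0 < δ → ∃ τ₀ : ℕ, ∀ τ ≥ τ₀, ∑ y, |stepDist μ P τ y - stepDist ν P τ y| ≤ δ := by
  intro δ hδ
  obtain ⟨m, hm, hpos⟩ := hPia
  set Δ : ℕ → ℝ := fun τ => ∑ y, |stepDist μ P τ y - stepDist ν P τ y| with hΔ
  have hmass : ∀ τ, ∑ x, stepDist μ P τ x = ∑ x, stepDist ν P τ x := by
    intro τ; rw [stepDist_mass hP, stepDist_mass hP, hμ.2, hν.2]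
  obtain ⟨p, -, hpmin⟩ := Finset.exists_min_image (Finset.univ : Finset (𝕏 × 𝕏))
    (fun p => matPow P m p.1 p.2) Finset.univ_nonempty
  set c := matPow P m p.1 p.2 with hc
  have hc0 : 0 < c := hpos p.1 p.2
  have hcle : ∀ x y, c ≤ matPow P m x y := fun x y => hpmin (x, y) (Finset.mem_univ _)
  set r : ℝ := 1 - Fintype.card 𝕏 * c with hr
  have hr1 : r < 1 := by
    have hcard : 0 < (Fintype.card 𝕏 : ℝ) := by exact_mod_cast Fintype.card_pos
    nlinarith
  have hmono : ∀ τ, Δ (τ + 1) ≤ Δ τ := by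
    intro τ
    have hco := l1_contract P hP.2 0 (fun x y => hP.1 x y)
      (stepDist μ P τ) (stepDist ν P τ) (hmass τ)
    simp only [mul_zero, sub_zero, one_mul] at hco
    calc Δ (τ + 1)
        = ∑ y, |∑ x, stepDist μ P τ x * P x y - ∑ x, stepDist ν P τ x * P x y| := by
          refine Finset.sum_congr rfl fun y _ => ?_
          rw [stepDist_succ, stepDist_succ]
      _ ≤ Δ τ := hco
  have hanti : Antitone Δ := antitone_nat_of_succ_le hmono
  have hr0 : 0 ≤ r := by
    obtain ⟨x⟩ := hne
    have h1 : (1:ℝ) = ∑ y, matPow P m x y := (matPow_rowsum hP m x).symm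
    have h2 : ∑ y : 𝕏, c ≤ ∑ y, matPow P m x y := Finset.sum_le_sum fun y _ => hcle x y
    rw [Finset.sum_const, Finset.card_univ, nsmul_eq_mul] at h2
    rw [hr]; linarith
  have hgeo : ∀ k : ℕ, Δ (k * m) ≤ r ^ k * 2 := by
    intro k
    induction k with
    | zero =>
        simp only [Nat.zero_mul, pow_zero, one_mul]
        have h3 : Δ 0 = ∑ x, |μ x - ν x| := by rw [hΔ]; simp [stepDist_zero]
        rw [h3]
        exact l1_le_two hμ hν
    | succ k ih =>
        have hco := l1_contract (matPow P m) (matPow_rowsum hP m) c hcle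
          (stepDist μ P (k * m)) (stepDist ν P (k * m)) (hmass (k * m))
        have hstep : Δ ((k+1) * m) ≤ r * Δ (k * m) := by
          calc Δ ((k+1) * m)
              = ∑ y, |∑ x, stepDist μ P (k*m) x * matPow P m x y
                  - ∑ x, stepDist ν P (k*m) x * matPow P m x y| := by
                refine Finset.sum_congr rfl fun y _ => ?_
                have h1 : (k+1) * m = k * m + m := by ring
                rw [h1, stepDist_add, stepDist_add]
            _ ≤ r * Δ (k * m) := hco
        calc Δ ((k+1) * m) ≤ r * Δ (k * m) := hstep
          _ ≤ r * (r ^ k * 2) := mul_le_mul_of_nonneg_left ih hr0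
          _ = r ^ (k+1) * 2 := by ring
  obtain ⟨k, hk⟩ := exists_pow_lt_of_lt_one (x := δ / 2) (by linarith) hr1
  refine ⟨k * m, fun τ hτ => ?_⟩
  calc Δ τ ≤ Δ (k * m) := hanti hτ
    _ ≤ r ^ k * 2 := hgeo k
    _ ≤ δ := by linarith

end AuxB
section AuxC1

/-- Achievability predicate matching the set in `RDE`. -/
def Ach {S T : Type} [Fintype S] (law : ∀ n : ℕ, (Fin n → S) → ℝ) (ρ : S → T → ℝ)
    (D R : ℝ) : Prop :=
  ∃ enc : ∀ n : ℕ, (Fin n → S) → Fin (2 ^ ⌊(n : ℝ) * R⌋₊),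
  ∃ dec : ∀ n : ℕ, Fin (2 ^ ⌊(n : ℝ) * R⌋₊) → (Fin n → T),
    Filter.limsup (fun n : ℕ =>
      ∑ x : Fin n → S, law n x * ((n : ℝ)⁻¹ *
        ∑ i, ρ (x i) (dec n (enc n x) i))) Filter.atTop ≤ D

lemma RDE_eq {S T : Type} [Fintype S] (law : ∀ n : ℕ, (Fin n → S) → ℝ) (ρ : S → T → ℝ)
    (D : ℝ) : RDE law ρ D = sInf {R | Ach law ρ D R} := rfl

lemma Ach.mono {S T : Type} [Fintype S] [Nonempty T] {law : ∀ n : ℕ, (Fin n → S) → ℝ}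
    {ρ : S → T → ℝ} {D R R' : ℝ} (hRR : R ≤ R') (h : Ach law ρ D R) : Ach law ρ D R' := by
  obtain ⟨enc, dec, hl⟩ := h
  have hle : ∀ n : ℕ, 2 ^ ⌊(n : ℝ) * R⌋₊ ≤ 2 ^ ⌊(n : ℝ) * R'⌋₊ := fun n =>
    Nat.pow_le_pow_right (by norm_num)
      (Nat.floor_mono (mul_le_mul_of_nonneg_left hRR (Nat.cast_nonneg n)))
  refine ⟨fun n x => Fin.castLE (hle n) (enc n x),
    fun n k => if hk : k.1 < 2 ^ ⌊(n : ℝ) * R⌋₊ then dec n ⟨k.1, hk⟩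
      else fun _ => Classical.arbitrary T, le_trans (le_of_eq ?_) hl⟩
  congr 1
  funext n
  refine Finset.sum_congr rfl fun x _ => ?_
  simp only
  rw [dif_pos]
  · simp
  · exact (enc n x).2

/-- `Ach` with an explicit exponent sequence. -/
def AchE {S T : Type} [Fintype S] (law : ∀ n : ℕ, (Fin n → S) → ℝ) (ρ : S → T → ℝ)
    (D : ℝ) (e : ℕ → ℕ) : Prop :=
  ∃ enc : ∀ n : ℕ, (Fin n → S) → Fin (2 ^ e n),
  ∃ dec : ∀ n : ℕ, Fin (2 ^ e n) → (Fin n → T),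
    Filter.limsup (fun n : ℕ =>
      ∑ x : Fin n → S, law n x * ((n : ℝ)⁻¹ *
        ∑ i, ρ (x i) (dec n (enc n x) i))) Filter.atTop ≤ D

lemma ach_eq_achE {S T : Type} [Fintype S] (law : ∀ n : ℕ, (Fin n → S) → ℝ) (ρ : S → T → ℝ)
    (D R : ℝ) : Ach law ρ D R = AchE law ρ D (fun n => ⌊(n : ℝ) * R⌋₊) := rfl

lemma ach_neg_iff {S T : Type} [Fintype S] {law : ∀ n : ℕ, (Fin n → S) → ℝ}
    {ρ : S → T → ℝ} {D R : ℝ} (hR : R < 0) : Ach law ρ D R ↔ Ach law ρ D 0 := by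
  have hfe : (fun n : ℕ => ⌊(n : ℝ) * R⌋₊) = (fun n : ℕ => ⌊(n : ℝ) * 0⌋₊) := by
    funext n
    rw [Nat.floor_of_nonpos (mul_nonpos_of_nonneg_of_nonpos (Nat.cast_nonneg n) hR.le),
      mul_zero, Nat.floor_zero]
  rw [ach_eq_achE, ach_eq_achE, hfe]

end AuxC1
section AuxC2

open Filter in
lemma limsup_le_glue {a b c : ℕ → ℝ} {D C : ℝ}
    (ha : Filter.limsup a Filter.atTop ≤ D)
    (haub : ∀ n, a n ≤ C)
    (hb0 : ∀ n, 0 ≤ b n)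
    (hc : Filter.Tendsto c Filter.atTop (nhds 0))
    (hbac : ∀ᶠ n in Filter.atTop, b n ≤ a n + c n) :
    Filter.limsup b Filter.atTop ≤ D := by
  refine le_of_forall_pos_le_add fun η hη => ?_
  have hab : IsBoundedUnder (· ≤ ·) atTop a := isBoundedUnder_of ⟨C, haub⟩
  have h1 : ∀ᶠ n in atTop, a n < D + η/2 :=
    eventually_lt_of_limsup_lt (lt_of_le_of_lt ha (by linarith)) hab
  have h2 : ∀ᶠ n in atTop, c n < η/2 := by
    have : Set.Iio (η/2) ∈ nhds (0:ℝ) := Iio_mem_nhds (by linarith)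
    exact hc.eventually this
  have h3 : ∀ᶠ n in atTop, b n ≤ D + η := by
    filter_upwards [h1, h2, hbac] with n k1 k2 k3
    linarith
  have hcb : IsCoboundedUnder (· ≤ ·) atTop b :=
    IsBoundedUnder.isCoboundedUnder_le (isBoundedUnder_of ⟨0, hb0⟩)
  exact Filter.limsup_le_of_le hcb h3

variable {𝕏 : Type} [Fintype 𝕏] [DecidableEq 𝕏]

lemma ach_lossless (hne : Nonempty 𝕏) {d : 𝕏 → 𝕏 → ℝ} (hdiag : ∀ x, d x x = 0)
    (law : ∀ n : ℕ, (Fin n → 𝕏) → ℝ) (D : ℝ) (hD : 0 ≤ D) :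
    Ach law d D (Fintype.card 𝕏 : ℝ) := by
  have hcardle : ∀ n : ℕ, Fintype.card (Fin n → 𝕏) ≤ 2 ^ ⌊(n:ℝ) * (Fintype.card 𝕏 : ℝ)⌋₊ := by
    intro n
    have h1 : ⌊(n:ℝ) * (Fintype.card 𝕏 : ℝ)⌋₊ = n * Fintype.card 𝕏 := by
      rw [← Nat.cast_mul, Nat.floor_natCast]
    rw [h1, Fintype.card_fun, Fintype.card_fin]
    calc Fintype.card 𝕏 ^ n ≤ (2 ^ Fintype.card 𝕏) ^ n :=
          Nat.pow_le_pow_left (Nat.lt_two_pow_self).le n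
      _ = 2 ^ (n * Fintype.card 𝕏) := by rw [← pow_mul, Nat.mul_comm]
  refine ⟨fun n x => Fin.castLE (hcardle n) (Fintype.equivFin (Fin n → 𝕏) x),
    fun n k => if hk : k.1 < Fintype.card (Fin n → 𝕏)
      then (Fintype.equivFin (Fin n → 𝕏)).symm ⟨k.1, hk⟩
      else fun _ => Classical.arbitrary 𝕏, ?_⟩
  have hfun : (fun n : ℕ => ∑ x : Fin n → 𝕏, law n x * ((n:ℝ)⁻¹ * ∑ i,
      d (x i) ((if hk : (Fin.castLE (hcardle n) (Fintype.equivFin (Fin n → 𝕏) x) : Fin _).1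
          < Fintype.card (Fin n → 𝕏)
        then (Fintype.equivFin (Fin n → 𝕏)).symm
          ⟨(Fin.castLE (hcardle n) (Fintype.equivFin (Fin n → 𝕏) x) : Fin _).1, hk⟩
        else fun _ => Classical.arbitrary 𝕏) i))) = fun _ => (0:ℝ) := by
    funext n
    refine Finset.sum_eq_zero fun x _ => ?_
    rw [dif_pos]
    · simp [hdiag]
    · exact (Fintype.equivFin (Fin n → 𝕏) x).2
  simp only
  rw [hfun, Filter.limsup_const]
  exact hD

lemma markov_coord {P : 𝕏 → 𝕏 → ℝ} (hP : IsStochastic P) (γ : 𝕏 → ℝ) (hγ : ∑ a, γ a = 1)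
    (n : ℕ) (i : Fin n) (f : 𝕏 → ℝ) :
    ∑ x : Fin n → 𝕏, markovLaw γ P n x * f (x i) = ∑ a, stepDist γ P i.1 a * f a := by
  obtain ⟨m', hm'⟩ : ∃ m', n - i.1 = m' + 1 :=
    ⟨n - i.1 - 1, by omega⟩
  have hn : n = i.1 + (m' + 1) := by omega
  have key := markov_marginal hP i.1 γ hγ n (m' + 1) hn (fun z => f (z 0))
  rw [markov_head hP] at key
  rw [← key]
  refine Finset.sum_congr rfl fun x _ => ?_
  congr 2

end AuxC2
section AuxC3

variable {𝕏 : Type} [Fintype 𝕏] [DecidableEq 𝕏]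

lemma dmax_bound {d : 𝕏 → 𝕏 → ℝ} (hd0 : ∀ x y, 0 ≤ d x y) (x y : 𝕏) :
    d x y ≤ ∑ a, ∑ b, d a b := by
  calc d x y ≤ ∑ b, d x b := Finset.single_le_sum (fun b _ => hd0 x b) (Finset.mem_univ y)
    _ ≤ ∑ a, ∑ b, d a b := Finset.single_le_sum (f := fun a => ∑ b, d a b)
        (fun a _ => Finset.sum_nonneg fun b _ => hd0 a b) (Finset.mem_univ x)

lemma mixing_tendsto {P : 𝕏 → 𝕏 → ℝ} (hP : IsStochastic P) (hPia : IsIrreducibleAperiodic P)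
    (hne : Nonempty 𝕏) {μ ν : 𝕏 → ℝ} (hμ : IsProbDist μ) (hν : IsProbDist ν) :
    Filter.Tendsto (fun t : ℕ => ∑ y, |stepDist ν P t y - stepDist μ P t y|)
      Filter.atTop (nhds 0) := by
  rw [Metric.tendsto_atTop]
  intro ε hε
  obtain ⟨τ₀, hτ₀⟩ := mixing_main hP hPia hne ν μ hν hμ (ε/2) (by linarith)
  refine ⟨τ₀, fun n hn => ?_⟩
  rw [Real.dist_eq, sub_zero, abs_of_nonneg (Finset.sum_nonneg fun y _ => abs_nonneg _)]
  calc ∑ y, |stepDist ν P n y - stepDist μ P n y| ≤ ε/2 := hτ₀ n hn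
    _ < ε := by linarith

lemma ach_zero_transfer {P : 𝕏 → 𝕏 → ℝ} (hP : IsStochastic P) (hPia : IsIrreducibleAperiodic P)
    (hne : Nonempty 𝕏) {μ ν : 𝕏 → ℝ} (hμ : IsProbDist μ) (hν : IsProbDist ν)
    {d : 𝕏 → 𝕏 → ℝ} (hd0 : ∀ x y, 0 ≤ d x y) {D : ℝ}
    (h : Ach (markovLaw μ P) d D 0) : Ach (markovLaw ν P) d D 0 := by
  classical
  obtain ⟨enc, dec, hl⟩ := h
  refine ⟨enc, dec, ?_⟩
  set DM : ℝ := ∑ a, ∑ b, d a b with hDM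
  have hDM0 : 0 ≤ DM := Finset.sum_nonneg fun a _ => Finset.sum_nonneg fun b _ => hd0 a b
  have honly : ∀ n (x x' : Fin n → 𝕏), enc n x = enc n x' := by
    intro n x x'
    have h1 : (2:ℕ) ^ ⌊(n:ℝ) * (0:ℝ)⌋₊ = 1 := by norm_num
    have hx : (enc n x).1 < 1 := lt_of_lt_of_le (enc n x).2 (le_of_eq h1)
    have hx' : (enc n x').1 < 1 := lt_of_lt_of_le (enc n x').2 (le_of_eq h1)
    exact Fin.ext (by omega)
  set x₀ : ∀ n : ℕ, Fin n → 𝕏 := fun n _ => Classical.arbitrary 𝕏 with hx₀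
  have hYx : ∀ n (x : Fin n → 𝕏), dec n (enc n x) = dec n (enc n (x₀ n)) :=
    fun n x => congrArg (dec n) (honly n x (x₀ n))
  set Y : ∀ n : ℕ, Fin n → 𝕏 := fun n => dec n (enc n (x₀ n)) with hY
  set A : ℕ → ℝ := fun n => ∑ x : Fin n → 𝕏,
    markovLaw μ P n x * ((n:ℝ)⁻¹ * ∑ i, d (x i) (Y n i)) with hA
  set B : ℕ → ℝ := fun n => ∑ x : Fin n → 𝕏,
    markovLaw ν P n x * ((n:ℝ)⁻¹ * ∑ i, d (x i) (Y n i)) with hB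
  have hlA : Filter.limsup A Filter.atTop ≤ D := by
    refine le_trans (le_of_eq ?_) hl
    congr 1
    funext n
    exact Finset.sum_congr rfl fun x _ => by rw [hYx n x]
  have hdecomp : ∀ (γ : 𝕏 → ℝ), (∑ a, γ a = 1) → ∀ n : ℕ,
      ∑ x : Fin n → 𝕏, markovLaw γ P n x * ((n:ℝ)⁻¹ * ∑ i, d (x i) (Y n i))
        = (n:ℝ)⁻¹ * ∑ i : Fin n, ∑ a, stepDist γ P i.1 a * d a (Y n i) := by
    intro γ hγ1 n
    have e1 : ∀ x : Fin n → 𝕏, markovLaw γ P n x * ((n:ℝ)⁻¹ * ∑ i, d (x i) (Y n i))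
        = (n:ℝ)⁻¹ * ∑ i, markovLaw γ P n x * d (x i) (Y n i) := by
      intro x
      rw [mul_left_comm, Finset.mul_sum]
    simp_rw [e1]
    rw [← Finset.mul_sum, Finset.sum_comm]
    congr 1
    exact Finset.sum_congr rfl fun i _ => markov_coord hP γ hγ1 n i (fun a => d a (Y n i))
  set Δ : ℕ → ℝ := fun t => ∑ a, |stepDist ν P t a - stepDist μ P t a| with hΔd
  have hBA : ∀ n, B n ≤ A n + DM * ((n:ℝ)⁻¹ * ∑ i ∈ Finset.range n, Δ i) := by
    intro n
    rw [hB, hA]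
    simp only
    rw [hdecomp ν hν.2 n, hdecomp μ hμ.2 n]
    have key : ∀ i : Fin n, ∑ a, stepDist ν P i.1 a * d a (Y n i)
        ≤ ∑ a, stepDist μ P i.1 a * d a (Y n i) + DM * Δ i.1 := by
      intro i
      have h2 : ∑ a, stepDist ν P i.1 a * d a (Y n i)
            - ∑ a, stepDist μ P i.1 a * d a (Y n i)
          = ∑ a, (stepDist ν P i.1 a - stepDist μ P i.1 a) * d a (Y n i) := by
        rw [← Finset.sum_sub_distrib]
        exact Finset.sum_congr rfl fun a _ => by ring
      have h3 : ∑ a, (stepDist ν P i.1 a - stepDist μ P i.1 a) * d a (Y n i) ≤ Δ i.1 * DM := by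
        calc ∑ a, (stepDist ν P i.1 a - stepDist μ P i.1 a) * d a (Y n i)
            ≤ ∑ a, |stepDist ν P i.1 a - stepDist μ P i.1 a| * DM := by
              refine Finset.sum_le_sum fun a _ => ?_
              calc (stepDist ν P i.1 a - stepDist μ P i.1 a) * d a (Y n i)
                  ≤ |stepDist ν P i.1 a - stepDist μ P i.1 a| * d a (Y n i) :=
                    mul_le_mul_of_nonneg_right (le_abs_self _) (hd0 _ _)
                _ ≤ |stepDist ν P i.1 a - stepDist μ P i.1 a| * DM :=
                    mul_le_mul_of_nonneg_left (dmax_bound hd0 _ _) (abs_nonneg _)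
          _ = Δ i.1 * DM := by rw [Finset.sum_mul]
      have h4 := h2 ▸ h3
      linarith [h4]
    have hninv : (0:ℝ) ≤ (n:ℝ)⁻¹ := by positivity
    calc (n:ℝ)⁻¹ * ∑ i : Fin n, ∑ a, stepDist ν P i.1 a * d a (Y n i)
        ≤ (n:ℝ)⁻¹ * ∑ i : Fin n, (∑ a, stepDist μ P i.1 a * d a (Y n i) + DM * Δ i.1) :=
          mul_le_mul_of_nonneg_left (Finset.sum_le_sum fun i _ => key i) hninv
      _ = (n:ℝ)⁻¹ * ∑ i : Fin n, ∑ a, stepDist μ P i.1 a * d a (Y n i)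
          + DM * ((n:ℝ)⁻¹ * ∑ i ∈ Finset.range n, Δ i) := by
          rw [Finset.sum_add_distrib, mul_add]
          congr 1
          rw [← Fin.sum_univ_eq_sum_range (fun i => Δ i) n, ← Finset.mul_sum]
          ring
  have hAub : ∀ n, A n ≤ DM := by
    intro n
    rw [hA]
    cases n with
    | zero => simpa using hDM0
    | succ k =>
        have hpos : (0:ℝ) < ((k+1 : ℕ) : ℝ) := by exact_mod_cast k.succ_pos
        calc ∑ x : Fin (k+1) → 𝕏, markovLaw μ P (k+1) x
              * (((k+1:ℕ):ℝ)⁻¹ * ∑ i, d (x i) (Y (k+1) i))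
            ≤ ∑ x : Fin (k+1) → 𝕏, markovLaw μ P (k+1) x * DM := by
              refine Finset.sum_le_sum fun x _ => ?_
              refine mul_le_mul_of_nonneg_left ?_ (markovLaw_nonneg hμ.1 hP _ x)
              have hsum : ∑ i : Fin (k+1), d (x i) (Y (k+1) i) ≤ ((k+1:ℕ):ℝ) * DM := by
                calc ∑ i : Fin (k+1), d (x i) (Y (k+1) i) ≤ ∑ _i : Fin (k+1), DM :=
                      Finset.sum_le_sum fun i _ => dmax_bound hd0 _ _
                  _ = ((k+1:ℕ):ℝ) * DM := by
                      rw [Finset.sum_const, Finset.card_univ, Fintype.card_fin, nsmul_eq_mul]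
              rw [inv_mul_le_iff₀ hpos]
              calc ∑ i : Fin (k+1), d (x i) (Y (k+1) i) ≤ ((k+1:ℕ):ℝ) * DM := hsum
                _ = ((k+1:ℕ):ℝ) * DM := rfl
          _ = DM := by rw [← Finset.sum_mul, markovLaw_mass hP, hμ.2, one_mul]
  have hB0 : ∀ n, 0 ≤ B n := by
    intro n
    refine Finset.sum_nonneg fun x _ => mul_nonneg (markovLaw_nonneg hν.1 hP _ x)
      (mul_nonneg (by positivity) (Finset.sum_nonneg fun i _ => hd0 _ _))
  have hces : Filter.Tendsto (fun n : ℕ => DM * ((n:ℝ)⁻¹ * ∑ i ∈ Finset.range n, Δ i))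
      Filter.atTop (nhds 0) := by
    have h1 : Filter.Tendsto Δ Filter.atTop (nhds 0) := mixing_tendsto hP hPia hne hμ hν
    have h2 := h1.cesaro
    have h3 := h2.const_mul DM
    simpa using h3
  have hgoal : Filter.limsup B Filter.atTop ≤ D :=
    limsup_le_glue hlA hAub hB0 hces (Filter.Eventually.of_forall hBA)
  refine le_trans (le_of_eq ?_) hgoal
  congr 1
  funext n
  exact Finset.sum_congr rfl fun x _ => by rw [hYx n x]

end AuxC3
section AuxC4

variable {𝕏 : Type} [Fintype 𝕏] [DecidableEq 𝕏]

lemma markovLaw_mass' {P : 𝕏 → 𝕏 → ℝ} (hP : IsStochastic P) {k : ℕ} (hk : 0 < k) (ν : 𝕏 → ℝ) :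
    ∑ x : Fin k → 𝕏, markovLaw ν P k x = ∑ a, ν a := by
  obtain ⟨k', rfl⟩ : ∃ k', k = k' + 1 := ⟨k - 1, by omega⟩
  exact markovLaw_mass hP k' ν

lemma markovLaw_l1plus {P : 𝕏 → 𝕏 → ℝ} (hP : IsStochastic P) {k : ℕ} (hk : 0 < k)
    (α β : 𝕏 → ℝ) :
    ∑ z : Fin k → 𝕏, |markovLaw α P k z - markovLaw β P k z| = ∑ x, |α x - β x| := by
  obtain ⟨k', rfl⟩ : ∃ k', k = k' + 1 := ⟨k - 1, by omega⟩
  exact markovLaw_l1 hP k' α β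

lemma exp_dist_ub {P : 𝕏 → 𝕏 → ℝ} (hP : IsStochastic P) {γ : 𝕏 → ℝ} (hγ : IsProbDist γ)
    {d : 𝕏 → 𝕏 → ℝ} (hd0 : ∀ x y, 0 ≤ d x y) (n : ℕ) (Y : (Fin n → 𝕏) → Fin n → 𝕏) :
    ∑ x : Fin n → 𝕏, markovLaw γ P n x * ((n:ℝ)⁻¹ * ∑ i, d (x i) (Y x i))
      ≤ ∑ a, ∑ b, d a b := by
  have hDM0 : (0:ℝ) ≤ ∑ a, ∑ b, d a b :=
    Finset.sum_nonneg fun a _ => Finset.sum_nonneg fun b _ => hd0 a b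
  cases n with
  | zero => simpa using hDM0
  | succ k =>
      have hpos : (0:ℝ) < ((k+1 : ℕ) : ℝ) := by exact_mod_cast k.succ_pos
      calc ∑ x : Fin (k+1) → 𝕏, markovLaw γ P (k+1) x
            * (((k+1:ℕ):ℝ)⁻¹ * ∑ i, d (x i) (Y x i))
          ≤ ∑ x : Fin (k+1) → 𝕏, markovLaw γ P (k+1) x * (∑ a, ∑ b, d a b) := by
            refine Finset.sum_le_sum fun x _ => ?_
            refine mul_le_mul_of_nonneg_left ?_ (markovLaw_nonneg hγ.1 hP _ x)
            have hsum : ∑ i : Fin (k+1), d (x i) (Y x i) ≤ ((k+1:ℕ):ℝ) * (∑ a, ∑ b, d a b) := by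
              calc ∑ i : Fin (k+1), d (x i) (Y x i) ≤ ∑ _i : Fin (k+1), ∑ a, ∑ b, d a b :=
                    Finset.sum_le_sum fun i _ => dmax_bound hd0 _ _
                _ = ((k+1:ℕ):ℝ) * (∑ a, ∑ b, d a b) := by
                    rw [Finset.sum_const, Finset.card_univ, Fintype.card_fin, nsmul_eq_mul]
            rw [inv_mul_le_iff₀ hpos]
            exact hsum
        _ = ∑ a, ∑ b, d a b := by rw [← Finset.sum_mul, markovLaw_mass hP, hγ.2, one_mul]

lemma exp_dist_nonneg {P : 𝕏 → 𝕏 → ℝ} (hP : IsStochastic P) {γ : 𝕏 → ℝ} (hγ : IsProbDist γ)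
    {d : 𝕏 → 𝕏 → ℝ} (hd0 : ∀ x y, 0 ≤ d x y) (n : ℕ) (Y : (Fin n → 𝕏) → Fin n → 𝕏) :
    0 ≤ ∑ x : Fin n → 𝕏, markovLaw γ P n x * ((n:ℝ)⁻¹ * ∑ i, d (x i) (Y x i)) :=
  Finset.sum_nonneg fun x _ => mul_nonneg (markovLaw_nonneg hγ.1 hP _ x)
    (mul_nonneg (by positivity) (Finset.sum_nonneg fun i _ => hd0 _ _))

lemma sqrt_tendsto_atTop : Filter.Tendsto Nat.sqrt Filter.atTop Filter.atTop := by
  rw [Filter.tendsto_atTop]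
  intro b
  filter_upwards [Filter.eventually_ge_atTop (b * b)] with n hn
  exact Nat.le_sqrt.2 hn

set_option maxHeartbeats 2000000 in
lemma ach_transfer {P : 𝕏 → 𝕏 → ℝ} (hP : IsStochastic P) (hPia : IsIrreducibleAperiodic P)
    (hne : Nonempty 𝕏) {μ ν : 𝕏 → ℝ} (hμ : IsProbDist μ) (hν : IsProbDist ν)
    {d : 𝕏 → 𝕏 → ℝ} (hd0 : ∀ x y, 0 ≤ d x y) (hdiag : ∀ x, d x x = 0) {D : ℝ}
    {R : ℝ} (hR : 0 ≤ R) (ε : ℝ) (hε : 0 < ε)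
    (h : Ach (markovLaw μ P) d D R) : Ach (markovLaw ν P) d D (R + ε) := by
  classical
  have _inst : Nonempty 𝕏 := hne
  obtain ⟨enc, dec, hl⟩ := h
  set DM : ℝ := ∑ a, ∑ b, d a b with hDM
  have hDM0 : 0 ≤ DM := Finset.sum_nonneg fun a _ => Finset.sum_nonneg fun b _ => hd0 a b
  set τ : ℕ → ℕ := Nat.sqrt with hτ
  set m : ℕ → ℕ := fun n => n - τ n with hm
  set Cnd : ℕ → Prop := fun n =>
    Fintype.card 𝕏 ^ τ n * 2 ^ ⌊(n:ℝ) * R⌋₊ ≤ 2 ^ ⌊(n:ℝ) * (R + ε)⌋₊ ∧ τ n < n with hCnd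
  -- total versions of prefix / tail / concatenation
  set tl : ∀ n : ℕ, (Fin n → 𝕏) → (Fin (m n) → 𝕏) :=
    fun n x i => x ⟨τ n + i.1, by have := i.2; simp only [hm] at this; omega⟩ with htl
  set pr : ∀ n : ℕ, (Fin n → 𝕏) → (Fin (τ n) → 𝕏) :=
    fun n x i => if h : i.1 < n then x ⟨i.1, h⟩ else Classical.arbitrary 𝕏 with hpr
  set ct : ∀ n : ℕ, (Fin (τ n) → 𝕏) → (Fin (m n) → 𝕏) → (Fin n → 𝕏) :=
    fun n w z j => if hj : j.1 < τ n then w ⟨j.1, hj⟩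
      else z ⟨j.1 - τ n, by have := j.2; simp only [hm]; omega⟩ with hct
  set g : ∀ n : ℕ, (Fin (τ n) → 𝕏) → (Fin (m n) → 𝕏) → ℝ :=
    fun n w z => ∑ i : Fin (m n), d (z i)
      (dec n (enc n (ct n w z)) ⟨τ n + i.1, by have := i.2; simp only [hm] at this; omega⟩)
    with hg
  have hwex : ∀ (n : ℕ) (z : Fin (m n) → 𝕏), ∃ w : Fin (τ n) → 𝕏, ∀ w', g n w z ≤ g n w' z := by
    intro n z
    obtain ⟨w, -, hw⟩ := Finset.exists_min_image Finset.univ (fun w => g n w z)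
      Finset.univ_nonempty
    exact ⟨w, fun w' => hw w' (Finset.mem_univ _)⟩
  choose wsel hwspec using hwex
  -- embedding of the product codebook
  have hembex : ∀ n : ℕ, Cnd n →
      ∃ f : ((Fin (τ n) → 𝕏) × Fin (2 ^ ⌊(n:ℝ) * R⌋₊)) → Fin (2 ^ ⌊(n:ℝ) * (R + ε)⌋₊),
        Function.Injective f := by
    intro n hC
    have hcard : Fintype.card ((Fin (τ n) → 𝕏) × Fin (2 ^ ⌊(n:ℝ) * R⌋₊))
        ≤ Fintype.card (Fin (2 ^ ⌊(n:ℝ) * (R + ε)⌋₊)) := by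
      rw [Fintype.card_prod, Fintype.card_fun, Fintype.card_fin, Fintype.card_fin,
        Fintype.card_fin]
      exact hC.1
    obtain ⟨f⟩ := Function.Embedding.nonempty_of_card_le hcard
    exact ⟨f, f.injective⟩
  set embf : ∀ n : ℕ, ((Fin (τ n) → 𝕏) × Fin (2 ^ ⌊(n:ℝ) * R⌋₊)) → Fin (2 ^ ⌊(n:ℝ) * (R + ε)⌋₊) :=
    fun n => if hC : Cnd n then Classical.choose (hembex n hC)
      else fun _ => ⟨0, by positivity⟩ with hembf
  have hembinj : ∀ n : ℕ, Cnd n → Function.Injective (embf n) := by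
    intro n hC
    simp only [hembf]
    rw [dif_pos hC]
    exact Classical.choose_spec (hembex n hC)
  -- the code for the ν chain
  set enc' : ∀ n : ℕ, (Fin n → 𝕏) → Fin (2 ^ ⌊(n:ℝ) * (R + ε)⌋₊) :=
    fun n x => embf n (pr n x, enc n (ct n (wsel n (tl n x)) (tl n x))) with henc'
  set dec' : ∀ n : ℕ, Fin (2 ^ ⌊(n:ℝ) * (R + ε)⌋₊) → (Fin n → 𝕏) :=
    fun n k j => if hj : j.1 < τ n then (Function.invFun (embf n) k).1 ⟨j.1, hj⟩
      else dec n (Function.invFun (embf n) k).2 j with hdec'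
  -- round trip
  have hround : ∀ (n : ℕ), Cnd n → ∀ (x : Fin n → 𝕏) (j : Fin n),
      dec' n (enc' n x) j = if hj : j.1 < τ n then pr n x ⟨j.1, hj⟩
        else dec n (enc n (ct n (wsel n (tl n x)) (tl n x))) j := by
    intro n hC x j
    have hinv : Function.invFun (embf n) (enc' n x)
        = (pr n x, enc n (ct n (wsel n (tl n x)) (tl n x))) := by
      rw [henc']
      exact Function.leftInverse_invFun (hembinj n hC) _
    simp only [hdec']
    simp only [hinv]
  -- distortion identity under Cnd
  have hdist : ∀ (n : ℕ), Cnd n → ∀ x : Fin n → 𝕏,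
      ∑ j : Fin n, d (x j) (dec' n (enc' n x) j) = g n (wsel n (tl n x)) (tl n x) := by
    intro n hC x
    set e : Fin (m n) ↪ Fin n :=
      ⟨fun i => ⟨τ n + i.1, by have := i.2; simp only [hm] at this; omega⟩, by
        intro a b hab
        have := congrArg Fin.val hab
        simp only at this
        exact Fin.ext (by omega)⟩ with he
    have hsub : ∑ j ∈ Finset.univ.map e, d (x j) (dec' n (enc' n x) j)
        = ∑ j : Fin n, d (x j) (dec' n (enc' n x) j) := by
      refine Finset.sum_subset (Finset.subset_univ _) fun j _ hj => ?_
      have hjτ : j.1 < τ n := by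
        by_contra hge
        refine hj (Finset.mem_map.2 ⟨⟨j.1 - τ n, ?_⟩, Finset.mem_univ _, ?_⟩)
        · simp only [hm]; omega
        · exact Fin.ext (by show τ n + (j.1 - τ n) = j.1; omega)
      rw [hround n hC x j, dif_pos hjτ]
      have hpx : pr n x ⟨j.1, hjτ⟩ = x j := by
        rw [hpr]
        simp only
        rw [dif_pos (lt_trans hjτ hC.2)]
      rw [hpx]
      exact hdiag _
    rw [← hsub, Finset.sum_map]
    rw [hg]
    simp only
    refine Finset.sum_congr rfl fun i _ => ?_
    have hjτ : ¬ ((e i : Fin n).1 < τ n) := by show ¬ (τ n + i.1 < τ n); omega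
    rw [hround n hC x (e i), dif_neg hjτ]
    rfl
  -- the minimized tail distortion is bounded
  have hgle : ∀ (n : ℕ) (w : Fin (τ n) → 𝕏) (z : Fin (m n) → 𝕏), g n w z ≤ m n * DM := by
    intro n w z
    rw [hg]
    simp only
    calc ∑ i : Fin (m n), d (z i) _ ≤ ∑ _i : Fin (m n), DM :=
          Finset.sum_le_sum fun i _ => dmax_bound hd0 _ _
      _ = m n * DM := by
          rw [Finset.sum_const, Finset.card_univ, Fintype.card_fin, nsmul_eq_mul]
  have hg0 : ∀ (n : ℕ) (w : Fin (τ n) → 𝕏) (z : Fin (m n) → 𝕏), 0 ≤ g n w z := by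
    intro n w z
    rw [hg]
    exact Finset.sum_nonneg fun i _ => hd0 _ _
  -- sequences
  set A : ℕ → ℝ := fun n => ∑ x : Fin n → 𝕏,
    markovLaw μ P n x * ((n:ℝ)⁻¹ * ∑ i, d (x i) (dec n (enc n x) i)) with hA
  set B : ℕ → ℝ := fun n => ∑ x : Fin n → 𝕏,
    markovLaw ν P n x * ((n:ℝ)⁻¹ * ∑ i, d (x i) (dec' n (enc' n x) i)) with hB
  set Δ : ℕ → ℝ := fun t => ∑ y, |stepDist ν P t y - stepDist μ P t y| with hΔ
  have hΔ0 : ∀ t, 0 ≤ Δ t := fun t => Finset.sum_nonneg fun y _ => abs_nonneg _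
  -- key estimate
  have hkey : ∀ n : ℕ, Cnd n → B n ≤ A n + DM * Δ (τ n) := by
    intro n hC
    have hn0 : 0 < n := lt_of_le_of_lt (Nat.zero_le _) hC.2
    have hnR : (0:ℝ) < (n:ℝ) := by exact_mod_cast hn0
    have hm0 : 0 < m n := by simp only [hm]; omega
    set gmin : (Fin (m n) → 𝕏) → ℝ := fun z => g n (wsel n z) z with hgmin
    -- B n = n⁻¹ * ∑_x L_ν gmin (tail x)
    have hB1 : B n = (n:ℝ)⁻¹ * ∑ x : Fin n → 𝕏, markovLaw ν P n x * gmin (tl n x) := by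
      rw [hB]
      simp only
      rw [Finset.mul_sum]
      refine Finset.sum_congr rfl fun x _ => ?_
      rw [hdist n hC x, mul_left_comm]
    -- marginalize
    have hM1ν : ∑ x : Fin n → 𝕏, markovLaw ν P n x * gmin (tl n x)
        = ∑ z : Fin (m n) → 𝕏, markovLaw (stepDist ν P (τ n)) P (m n) z * gmin z := by
      have := markov_marginal hP (τ n) ν hν.2 n (m n) (by simp only [hm]; omega) gmin
      exact this
    have hM1μ : ∑ x : Fin n → 𝕏, markovLaw μ P n x * gmin (tl n x)
        = ∑ z : Fin (m n) → 𝕏, markovLaw (stepDist μ P (τ n)) P (m n) z * gmin z := by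
      have := markov_marginal hP (τ n) μ hμ.2 n (m n) (by simp only [hm]; omega) gmin
      exact this
    -- total variation step
    have hTV : ∑ z : Fin (m n) → 𝕏, markovLaw (stepDist ν P (τ n)) P (m n) z * gmin z
        ≤ ∑ z : Fin (m n) → 𝕏, markovLaw (stepDist μ P (τ n)) P (m n) z * gmin z
          + (m n * DM) * Δ (τ n) := by
      have hdiff : ∑ z : Fin (m n) → 𝕏, markovLaw (stepDist ν P (τ n)) P (m n) z * gmin z
            - ∑ z : Fin (m n) → 𝕏, markovLaw (stepDist μ P (τ n)) P (m n) z * gmin z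
          = ∑ z : Fin (m n) → 𝕏, (markovLaw (stepDist ν P (τ n)) P (m n) z
            - markovLaw (stepDist μ P (τ n)) P (m n) z) * gmin z := by
        rw [← Finset.sum_sub_distrib]
        exact Finset.sum_congr rfl fun z _ => by ring
      have hbd : ∑ z : Fin (m n) → 𝕏, (markovLaw (stepDist ν P (τ n)) P (m n) z
            - markovLaw (stepDist μ P (τ n)) P (m n) z) * gmin z
          ≤ (m n * DM) * Δ (τ n) := by
        calc ∑ z : Fin (m n) → 𝕏, (markovLaw (stepDist ν P (τ n)) P (m n) z
              - markovLaw (stepDist μ P (τ n)) P (m n) z) * gmin z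
            ≤ ∑ z : Fin (m n) → 𝕏, |markovLaw (stepDist ν P (τ n)) P (m n) z
              - markovLaw (stepDist μ P (τ n)) P (m n) z| * (m n * DM) := by
              refine Finset.sum_le_sum fun z _ => ?_
              calc (markovLaw (stepDist ν P (τ n)) P (m n) z
                    - markovLaw (stepDist μ P (τ n)) P (m n) z) * gmin z
                  ≤ |markovLaw (stepDist ν P (τ n)) P (m n) z
                    - markovLaw (stepDist μ P (τ n)) P (m n) z| * gmin z :=
                    mul_le_mul_of_nonneg_right (le_abs_self _) (hg0 n _ z)
                _ ≤ |markovLaw (stepDist ν P (τ n)) P (m n) z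
                    - markovLaw (stepDist μ P (τ n)) P (m n) z| * (m n * DM) :=
                    mul_le_mul_of_nonneg_left (hgle n _ z) (abs_nonneg _)
          _ = (∑ z : Fin (m n) → 𝕏, |markovLaw (stepDist ν P (τ n)) P (m n) z
              - markovLaw (stepDist μ P (τ n)) P (m n) z|) * (m n * DM) := by
              rw [Finset.sum_mul]
          _ = Δ (τ n) * (m n * DM) := by
              rw [markovLaw_l1plus hP hm0]
          _ = (m n * DM) * Δ (τ n) := by ring
      linarith
    -- compare minimized tail distortion with the original code's distortion
    have hcmp : ∑ x : Fin n → 𝕏, markovLaw μ P n x * gmin (tl n x) ≤ (n:ℝ) * A n := by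
      have hxle : ∀ x : Fin n → 𝕏, gmin (tl n x) ≤ ∑ j : Fin n, d (x j) (dec n (enc n x) j) := by
        intro x
        have hprc : ct n (fun i : Fin (τ n) => x ⟨i.1, lt_trans i.2 hC.2⟩) (tl n x) = x := by
          funext j
          rw [hct]
          simp only
          split
          · next hj => rfl
          · next hj =>
              rw [htl]
              simp only
              exact congrArg x (Fin.ext (by simp; omega))
        calc gmin (tl n x) ≤ g n (fun i : Fin (τ n) => x ⟨i.1, lt_trans i.2 hC.2⟩) (tl n x) := by
              rw [hgmin]
              simpa using hwspec n (tl n x) (fun i : Fin (τ n) => x ⟨i.1, lt_trans i.2 hC.2⟩)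
          _ ≤ ∑ j : Fin n, d (x j) (dec n (enc n x) j) := by
              rw [hg]
              simp only
              rw [hprc]
              set e : Fin (m n) ↪ Fin n :=
                ⟨fun i => ⟨τ n + i.1, by have := i.2; simp only [hm] at this; omega⟩, by
                  intro a b hab
                  have := congrArg Fin.val hab
                  simp only at this
                  exact Fin.ext (by omega)⟩ with he
              calc ∑ i : Fin (m n), d (tl n x i) (dec n (enc n x)
                      ⟨τ n + i.1, by have := i.2; simp only [hm] at this; omega⟩)
                  = ∑ j ∈ Finset.univ.map e, d (x j) (dec n (enc n x) j) := by
                    rw [Finset.sum_map]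
                    rfl
                _ ≤ ∑ j : Fin n, d (x j) (dec n (enc n x) j) :=
                    Finset.sum_le_sum_of_subset_of_nonneg (Finset.subset_univ _)
                      (fun j _ _ => hd0 _ _)
      calc ∑ x : Fin n → 𝕏, markovLaw μ P n x * gmin (tl n x)
          ≤ ∑ x : Fin n → 𝕏, markovLaw μ P n x * ∑ j : Fin n, d (x j) (dec n (enc n x) j) :=
            Finset.sum_le_sum fun x _ =>
              mul_le_mul_of_nonneg_left (hxle x) (markovLaw_nonneg hμ.1 hP _ x)
        _ = (n:ℝ) * A n := by
            rw [hA]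
            simp only
            rw [Finset.mul_sum]
            refine Finset.sum_congr rfl fun x _ => ?_
            field_simp <;> ring
    -- put everything together
    have hA0 : 0 ≤ A n := exp_dist_nonneg hP hμ hd0 n _
    have hmn : (m n : ℝ) ≤ (n : ℝ) := by
      have : m n ≤ n := by simp only [hm]; omega
      exact_mod_cast this
    have hfinal : B n ≤ (n:ℝ)⁻¹ * ((n:ℝ) * A n + (m n * DM) * Δ (τ n)) := by
      rw [hB1, hM1ν]
      refine mul_le_mul_of_nonneg_left ?_ (by positivity)
      calc ∑ z : Fin (m n) → 𝕏, markovLaw (stepDist ν P (τ n)) P (m n) z * gmin z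
          ≤ ∑ z : Fin (m n) → 𝕏, markovLaw (stepDist μ P (τ n)) P (m n) z * gmin z
            + (m n * DM) * Δ (τ n) := hTV
        _ ≤ (n:ℝ) * A n + (m n * DM) * Δ (τ n) := by
            rw [← hM1μ]
            linarith [hcmp]
    calc B n ≤ (n:ℝ)⁻¹ * ((n:ℝ) * A n + (m n * DM) * Δ (τ n)) := hfinal
      _ = A n + (n:ℝ)⁻¹ * ((m n : ℝ) * (DM * Δ (τ n))) := by
          field_simp
      _ ≤ A n + 1 * (DM * Δ (τ n)) := by
          have h1 : (n:ℝ)⁻¹ * (m n : ℝ) ≤ 1 := by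
            rw [inv_mul_le_iff₀ hnR]
            linarith [hmn]
          have h2 : 0 ≤ DM * Δ (τ n) := mul_nonneg hDM0 (hΔ0 _)
          have h3 : (n:ℝ)⁻¹ * ((m n : ℝ) * (DM * Δ (τ n)))
              = ((n:ℝ)⁻¹ * (m n : ℝ)) * (DM * Δ (τ n)) := by ring
          rw [h3]
          exact (add_le_add_iff_left _).2 (mul_le_mul_of_nonneg_right h1 h2)
      _ = A n + DM * Δ (τ n) := by ring
  -- eventual validity of Cnd
  have hflooradd : ∀ n : ℕ, ⌊(n:ℝ) * R⌋₊ + ⌊(n:ℝ) * ε⌋₊ ≤ ⌊(n:ℝ) * (R + ε)⌋₊ := by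
    intro n
    refine Nat.le_floor ?_
    push_cast
    rw [mul_add]
    exact add_le_add (Nat.floor_le (mul_nonneg (Nat.cast_nonneg n) hR))
      (Nat.floor_le (mul_nonneg (Nat.cast_nonneg n) hε.le))
  have hsize_ev : ∀ᶠ n in Filter.atTop, Fintype.card 𝕏 * τ n ≤ ⌊(n:ℝ) * ε⌋₊ := by
    set c := Fintype.card 𝕏 with hc
    set K := ⌈(c:ℝ)/ε⌉₊ with hK
    have hKc : (c:ℝ) ≤ ε * K := by
      have h1 := Nat.le_ceil ((c:ℝ)/ε)
      rw [div_le_iff₀ hε] at h1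
      rw [← hK] at h1
      linarith
    filter_upwards [sqrt_tendsto_atTop.eventually_ge_atTop K] with n hn
    have hKτ : (K:ℝ) ≤ (τ n : ℝ) := by exact_mod_cast hn
    have hττ : ((τ n : ℝ)) * (τ n : ℝ) ≤ (n : ℝ) := by
      have h2 : τ n * τ n ≤ n := by
        simp only [hτ]
        simpa [pow_two] using Nat.sqrt_le' n
      exact_mod_cast h2
    refine Nat.le_floor ?_
    push_cast
    have hcτ : (c:ℝ) ≤ ε * τ n := le_trans hKc
      (mul_le_mul_of_nonneg_left hKτ hε.le)
    nlinarith [(Nat.cast_nonneg (τ n) : (0:ℝ) ≤ (τ n : ℝ)), hε.le]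
  have hC_ev : ∀ᶠ n in Filter.atTop, Cnd n := by
    filter_upwards [hsize_ev, Filter.eventually_ge_atTop 2] with n h1 h2
    refine ⟨?_, ?_⟩
    · calc Fintype.card 𝕏 ^ τ n * 2 ^ ⌊(n:ℝ) * R⌋₊
          ≤ 2 ^ (Fintype.card 𝕏 * τ n) * 2 ^ ⌊(n:ℝ) * R⌋₊ := by
            refine Nat.mul_le_mul_right _ ?_
            calc Fintype.card 𝕏 ^ τ n ≤ (2 ^ Fintype.card 𝕏) ^ τ n :=
                  Nat.pow_le_pow_left (Nat.lt_two_pow_self).le _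
              _ = 2 ^ (Fintype.card 𝕏 * τ n) := by rw [← pow_mul]
        _ = 2 ^ (Fintype.card 𝕏 * τ n + ⌊(n:ℝ) * R⌋₊) := (pow_add 2 _ _).symm
        _ ≤ 2 ^ ⌊(n:ℝ) * (R + ε)⌋₊ := by
            refine Nat.pow_le_pow_right (by norm_num) ?_
            have h3 := hflooradd n
            omega
    · exact Nat.sqrt_lt_self (by omega)
  -- convergence of the penalty term
  have hces : Filter.Tendsto (fun n : ℕ => DM * Δ (τ n)) Filter.atTop (nhds 0) := by
    have h1 : Filter.Tendsto Δ Filter.atTop (nhds 0) := mixing_tendsto hP hPia hne hμ hν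
    have h2 : Filter.Tendsto (fun n => Δ (τ n)) Filter.atTop (nhds 0) :=
      h1.comp sqrt_tendsto_atTop
    have h3 := h2.const_mul DM
    simpa using h3
  have hAub : ∀ n, A n ≤ DM := fun n => exp_dist_ub hP hμ hd0 n (fun x => dec n (enc n x))
  have hB0 : ∀ n, 0 ≤ B n := fun n => exp_dist_nonneg hP hν hd0 n (fun x => dec' n (enc' n x))
  refine ⟨enc', dec', ?_⟩
  have hev : ∀ᶠ n in Filter.atTop, B n ≤ A n + DM * Δ (τ n) := by
    filter_upwards [hC_ev] with n hC
    exact hkey n hC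
  exact limsup_le_glue hl hAub hB0 hces hev

end AuxC4

/-- **Theorem 1.** The operational rate-distortion function (expected distortion
criterion) of the Markov source `X_{[π',P]}` equals that of the source started in the
stationary distribution: `R^E_{X_{[π',P]}}(D) = R^E_{X_{[π,P]}}(D)`. -/
theorem markov_rd_initial_dist_independent
    {𝕏 : Type} [Fintype 𝕏] [DecidableEq 𝕏] (hcard : 2 ≤ Fintype.card 𝕏)
    (d : 𝕏 → 𝕏 → ℝ) (hdnn : ∀ x y, 0 ≤ d x y)
    (hdiag : ∀ x, d x x = 0) (hdpos : ∀ x y, x ≠ y → 0 < d x y)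
    (P : 𝕏 → 𝕏 → ℝ) (hP : IsStochastic P) (hPia : IsIrreducibleAperiodic P)
    (π : 𝕏 → ℝ) (hπ : IsProbDist π) (hπstat : IsStationaryDist P π)
    (π' : 𝕏 → ℝ) (hπ' : IsProbDist π')
    (D : ℝ) (hD : 0 < D) :
    markovRDE π' P d D = markovRDE π P d D := by
  have hne : Nonempty 𝕏 := Fintype.card_pos_iff.1 (by omega)
  haveI := hne
  show RDE (markovLaw π' P) d D = RDE (markovLaw π P) d D
  rw [RDE_eq, RDE_eq]
  by_cases h0 : Ach (markovLaw π' P) d D 0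
  · have h0' : Ach (markovLaw π P) d D 0 := ach_zero_transfer hP hPia hne hπ' hπ hdnn h0
    have huniv : ∀ γ : 𝕏 → ℝ, Ach (markovLaw γ P) d D 0 →
        {R : ℝ | Ach (markovLaw γ P) d D R} = Set.univ := by
      intro γ hγ0
      ext R
      simp only [Set.mem_setOf_eq, Set.mem_univ, iff_true]
      rcases lt_or_ge R 0 with hR | hR
      · exact (ach_neg_iff hR).2 hγ0
      · exact Ach.mono hR hγ0
    rw [huniv _ h0, huniv _ h0']
  · have h0' : ¬ Ach (markovLaw π P) d D 0 := fun hc =>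
      h0 (ach_zero_transfer hP hPia hne hπ hπ' hdnn hc)
    have hpos : ∀ γ : 𝕏 → ℝ, ¬ Ach (markovLaw γ P) d D 0 →
        ∀ R ∈ {R : ℝ | Ach (markovLaw γ P) d D R}, 0 < R := by
      intro γ hγ R hR
      rcases lt_trichotomy R 0 with h | h | h
      · exact absurd ((ach_neg_iff h).1 hR) hγ
      · exact absurd (h ▸ hR) hγ
      · exact h
    have key : ∀ μ ν : 𝕏 → ℝ, IsProbDist μ → IsProbDist ν →
        ¬ Ach (markovLaw μ P) d D 0 → ¬ Ach (markovLaw ν P) d D 0 →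
        sInf {R : ℝ | Ach (markovLaw ν P) d D R} ≤ sInf {R : ℝ | Ach (markovLaw μ P) d D R} := by
      intro μ ν hμ hν hμ0 hν0
      have hbbν : BddBelow {R : ℝ | Ach (markovLaw ν P) d D R} :=
        ⟨0, fun R hR => (hpos ν hν0 R hR).le⟩
      refine le_csInf ⟨_, ach_lossless hne hdiag _ D hD.le⟩ fun R hR => ?_
      have hR0 : 0 < R := hpos μ hμ0 R hR
      refine le_of_forall_pos_le_add fun ε hε => ?_
      exact csInf_le hbbν (ach_transfer hP hPia hne hμ hν hdnn hdiag hR0.le ε hε hR)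
    exact le_antisymm (key π π' hπ hπ' h0' h0) (key π' π hπ' hπ h0 h0')
end

section
/- For every probability distribution π' on 𝕏, every 0 < τ < T, and every D > 0, the operational rate-distortion functions satisfy R^E_{X^T_{[π',P]}}((T−τ)D + τ D_max) ≤ R^E_{J_τ(X^T_{[π',P]})}((T−τ)D). (Any code for the projected source can be used for the full BIA source by coding the first τ coordinates of each block arbitrarily, incurring at most τ D_max extra distortion per block.) -/
open Filter Finset

/-! ### Auxiliary lemmas -/

lemma my_dmax_le {𝕏 : Type} [Fintype 𝕏] (d : 𝕏 → 𝕏 → ℝ) (a b : 𝕏) : d a b ≤ Dmax d :=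
  le_ciSup (f := fun p : 𝕏 × 𝕏 => d p.1 p.2)
    (Set.Finite.bddAbove (Set.finite_range _)) (⟨a, b⟩ : 𝕏 × 𝕏)

lemma my_markovLaw_nonneg {𝕏 : Type} [Fintype 𝕏] (ν : 𝕏 → ℝ) (P : 𝕏 → 𝕏 → ℝ)
    (hν : ∀ x, 0 ≤ ν x) (hP : ∀ x y, 0 ≤ P x y) (n : ℕ) (x : Fin n → 𝕏) :
    0 ≤ markovLaw ν P n x := by
  cases n with
  | zero => exact zero_le_one
  | succ m => exact mul_nonneg (hν _) (Finset.prod_nonneg fun _ _ => hP _ _)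

lemma my_markovLaw_cons {𝕏 : Type} [Fintype 𝕏] (ν : 𝕏 → ℝ) (P : 𝕏 → 𝕏 → ℝ)
    (n : ℕ) (x0 : 𝕏) (t : Fin n → 𝕏) :
    markovLaw ν P (n + 1) (Fin.cons x0 t) = ν x0 * markovLaw (P x0) P n t := by
  cases n with
  | zero => simp [markovLaw]
  | succ m =>
    show ν x0 * _ = ν x0 * (P x0 (t 0) * _)
    rw [Fin.prod_univ_succ]
    simp [Fin.cons_succ, Fin.cons_zero, ← Fin.succ_castSucc]

lemma my_sum_markovLaw {𝕏 : Type} [Fintype 𝕏] (P : 𝕏 → 𝕏 → ℝ) (hP : ∀ x, ∑ y, P x y = 1) :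
    ∀ (n : ℕ) (ν : 𝕏 → ℝ), ∑ x, ν x = 1 → ∑ x : Fin n → 𝕏, markovLaw ν P n x = 1 := by
  intro n
  induction n with
  | zero => intro ν _; simp [markovLaw]
  | succ m ih =>
    intro ν hν
    rw [← Fintype.sum_equiv (Fin.consEquiv (fun _ : Fin (m+1) => 𝕏))
      (fun p => markovLaw ν P (m + 1) ((Fin.consEquiv (fun _ : Fin (m+1) => 𝕏)) p))
      (fun x => markovLaw ν P (m + 1) x) (fun p => rfl)]
    rw [Fintype.sum_prod_type]
    calc ∑ x0, ∑ t : Fin m → 𝕏,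
          markovLaw ν P (m + 1) ((Fin.consEquiv (fun _ : Fin (m+1) => 𝕏)) (x0, t))
        = ∑ x0, ∑ t : Fin m → 𝕏, ν x0 * markovLaw (P x0) P m t := by
          refine Finset.sum_congr rfl fun x0 _ => Finset.sum_congr rfl fun t _ => ?_
          show markovLaw ν P (m + 1) (Fin.cons x0 t) = _
          rw [my_markovLaw_cons]
      _ = ∑ x0, ν x0 * ∑ t : Fin m → 𝕏, markovLaw (P x0) P m t := by
          simp [Finset.mul_sum]
      _ = 1 := by
          rw [← hν]; refine Finset.sum_congr rfl fun x0 _ => ?_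
          rw [ih (P x0) (hP x0), mul_one]

lemma my_sum_iidLaw {S : Type} [Fintype S] [DecidableEq S] (q : S → ℝ) (hq : ∑ s, q s = 1)
    (n : ℕ) : ∑ x : Fin n → S, iidLaw q n x = 1 := by
  unfold iidLaw
  rw [← Fintype.piFinset_univ, ← Finset.prod_univ_sum (fun _ : Fin n => (univ : Finset S))
    (fun _ s => q s)]
  simp [hq]

/-- The projection map `J_τ`. -/
def Jmap {𝕏 : Type} (T τ : ℕ) (s : Fin T → 𝕏) : Fin (T - τ) → 𝕏 :=
  fun i => s ⟨τ + i.val, by have := i.isLt; omega⟩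

lemma my_projDist_eq {𝕏 : Type} [Fintype 𝕏] [DecidableEq 𝕏] {T : ℕ}
    (q : (Fin T → 𝕏) → ℝ) (τ : ℕ) (r : Fin (T - τ) → 𝕏) :
    projDist q τ r = ∑ s : Fin T → 𝕏, if Jmap T τ s = r then q s else 0 := by
  refine Finset.sum_congr rfl fun s _ => ?_
  refine if_congr ?_ rfl rfl
  rw [funext_iff]; rfl

lemma my_sum_projDist {𝕏 : Type} [Fintype 𝕏] [DecidableEq 𝕏] {T : ℕ}
    (q : (Fin T → 𝕏) → ℝ) (τ : ℕ) :
    ∑ r, projDist q τ r = ∑ s, q s := by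
  have h : ∀ r, projDist q τ r = ∑ s : Fin T → 𝕏, if Jmap T τ s = r then q s else 0 :=
    my_projDist_eq q τ
  simp_rw [h]
  rw [Finset.sum_comm]
  refine Finset.sum_congr rfl fun s _ => ?_
  simp [Finset.sum_ite_eq]

lemma my_projDist_nonneg {𝕏 : Type} [Fintype 𝕏] [DecidableEq 𝕏] {T : ℕ}
    (q : (Fin T → 𝕏) → ℝ) (hq : ∀ s, 0 ≤ q s) (τ : ℕ) (r : Fin (T - τ) → 𝕏) :
    0 ≤ projDist q τ r := by
  rw [my_projDist_eq]
  refine Finset.sum_nonneg fun s _ => ?_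
  split <;> simp [hq s]

lemma my_push {S S' : Type} [Fintype S] [Fintype S'] [DecidableEq S']
    (φ : S → S') (q : S → ℝ) (n : ℕ) (h : (Fin n → S') → ℝ) :
    ∑ y : Fin n → S', (∏ i, ∑ s : S, if φ s = y i then q s else 0) * h y
      = ∑ x : Fin n → S, (∏ i, q (x i)) * h (φ ∘ x) := by
  have key : ∀ y : Fin n → S', (∏ i, ∑ s : S, if φ s = y i then q s else 0)
      = ∑ x : Fin n → S, ∏ i, (if φ (x i) = y i then q (x i) else 0) := by
    intro y
    rw [Finset.prod_univ_sum (fun _ : Fin n => (univ : Finset S))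
      (fun i s => if φ s = y i then q s else 0)]
    rw [Fintype.piFinset_univ]
  simp_rw [key, Finset.sum_mul]
  rw [Finset.sum_comm]
  refine Finset.sum_congr rfl fun x _ => ?_
  have h2 : ∀ y : Fin n → S', (∏ i, (if φ (x i) = y i then q (x i) else 0))
      = if φ ∘ x = y then ∏ i, q (x i) else 0 := by
    intro y
    by_cases hxy : φ ∘ x = y
    · rw [if_pos hxy]
      refine Finset.prod_congr rfl fun i _ => ?_
      exact if_pos (congrFun hxy i)
    · rw [if_neg hxy]
      rw [funext_iff] at hxy; push_neg at hxy
      obtain ⟨i, hi⟩ := hxy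
      exact Finset.prod_eq_zero (Finset.mem_univ i) (if_neg hi)
  simp_rw [h2, ite_mul, zero_mul, Finset.sum_ite_eq]
  simp

lemma my_blockBound {𝕏 : Type} [Fintype 𝕏] (d : 𝕏 → 𝕏 → ℝ)
    (hdiag : ∀ x, d x x = 0) (T τ : ℕ) (hτT : τ < T) (x0 : 𝕏)
    (s : Fin T → 𝕏) (b : Fin (T - τ) → 𝕏) :
    (∑ j : Fin T, d (s j)
        (if h : (j : ℕ) < τ then x0 else b ⟨(j : ℕ) - τ, by have := j.isLt; omega⟩))
      ≤ (τ : ℝ) * Dmax d + ∑ i, d (Jmap T τ s i) (b i) := by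
  rw [← Finset.sum_filter_add_sum_filter_not univ (fun j : Fin T => (j : ℕ) < τ)]
  have h1 : ∑ j ∈ univ.filter (fun j : Fin T => (j : ℕ) < τ), d (s j)
        (if h : (j : ℕ) < τ then x0 else b ⟨(j : ℕ) - τ, by have := j.isLt; omega⟩)
      ≤ (τ : ℝ) * Dmax d := by
    have hd0 : 0 ≤ Dmax d := by
      have := my_dmax_le d x0 x0; rw [hdiag] at this; exact this
    calc ∑ j ∈ univ.filter (fun j : Fin T => (j : ℕ) < τ), d (s j)
          (if h : (j : ℕ) < τ then x0 else b ⟨(j : ℕ) - τ, by have := j.isLt; omega⟩)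
        ≤ ∑ _j ∈ univ.filter (fun j : Fin T => (j : ℕ) < τ), Dmax d := by
          refine Finset.sum_le_sum fun j hj => my_dmax_le d _ _
      _ = ((univ.filter (fun j : Fin T => (j : ℕ) < τ)).card : ℝ) * Dmax d := by
          rw [Finset.sum_const, nsmul_eq_mul]
      _ ≤ (τ : ℝ) * Dmax d := by
          refine mul_le_mul_of_nonneg_right ?_ hd0
          have hc : (univ.filter (fun j : Fin T => (j : ℕ) < τ)).card ≤ τ := by
            have h := Finset.card_le_card_of_injOn
              (s := univ.filter (fun j : Fin T => (j : ℕ) < τ))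
              (t := Finset.range τ) (fun j : Fin T => (j : ℕ))
              (fun a ha => by
                rw [Finset.mem_coe, Finset.mem_filter] at ha
                exact Finset.mem_range.2 ha.2)
              (fun a _ c _ hac => Fin.val_injective hac)
            simpa using h
          exact_mod_cast hc
  have h2 : ∑ j ∈ univ.filter (fun j : Fin T => ¬ (j : ℕ) < τ), d (s j)
        (if h : (j : ℕ) < τ then x0 else b ⟨(j : ℕ) - τ, by have := j.isLt; omega⟩)
      = ∑ i, d (Jmap T τ s i) (b i) := by
    refine Finset.sum_nbij'
      (fun j : Fin T => (⟨(j : ℕ) - τ, by have := j.isLt; omega⟩ : Fin (T - τ)))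
      (fun i : Fin (T - τ) => (⟨τ + (i : ℕ), by have := i.isLt; omega⟩ : Fin T))
      (fun a _ => Finset.mem_univ _)
      (fun i _ => by
        simp only [Finset.mem_filter, Finset.mem_univ, true_and]
        omega)
      (fun a ha => by
        simp only [Finset.mem_filter, Finset.mem_univ, true_and] at ha
        apply Fin.ext; show τ + ((a:ℕ) - τ) = (a:ℕ); omega)
      (fun i _ => by apply Fin.ext; show τ + (i:ℕ) - τ = (i:ℕ); omega)
      (fun a ha => ?_)
    simp only [Finset.mem_filter, Finset.mem_univ, true_and] at ha
    rw [dif_neg ha]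
    congr 1
    · show s a = s _
      congr 1
      apply Fin.ext
      show (a:ℕ) = τ + ((a:ℕ) - τ); omega
  rw [h2]
  exact add_le_add h1 le_rfl

lemma my_avg_le {n : ℕ} (w : Fin n → ℝ) (C : ℝ) (hC : 0 ≤ C) (hw : ∀ i, w i ≤ C) :
    (n : ℝ)⁻¹ * ∑ i, w i ≤ C := by
  rcases Nat.eq_zero_or_pos n with h | h
  · subst h; simpa using hC
  · have hsum : ∑ i, w i ≤ (n : ℝ) * C := by
      calc ∑ i, w i ≤ ∑ _i : Fin n, C := Finset.sum_le_sum fun i _ => hw i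
        _ = (n : ℝ) * C := by
          rw [Finset.sum_const, Finset.card_univ, Fintype.card_fin, nsmul_eq_mul]
    have hn : (0:ℝ) < (n : ℝ) := by exact_mod_cast h
    calc (n : ℝ)⁻¹ * ∑ i, w i ≤ (n : ℝ)⁻¹ * ((n : ℝ) * C) := by
          exact mul_le_mul_of_nonneg_left hsum (by positivity)
      _ = C := by field_simp
lemma my_exp_le {W : Type} [Fintype W] (Q : W → ℝ) (hQ0 : ∀ y, 0 ≤ Q y)
    (hQ1 : ∑ y, Q y = 1) (g : W → ℝ) (C : ℝ) (hg : ∀ y, g y ≤ C) :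
    ∑ y, Q y * g y ≤ C := by
  calc ∑ y, Q y * g y ≤ ∑ y, Q y * C :=
        Finset.sum_le_sum fun y _ => mul_le_mul_of_nonneg_left (hg y) (hQ0 y)
    _ = C := by rw [← Finset.sum_mul, hQ1, one_mul]

lemma my_sInf_le_sInf (A B : Set ℝ) (hBA : B ⊆ A) (hBne : B.Nonempty)
    (hneg : ∀ b ∈ B, b < 0 → ¬ BddBelow B) : sInf A ≤ sInf B := by
  by_cases hA : BddBelow A
  · exact le_csInf hBne fun b hb => csInf_le hA (hBA hb)
  · rw [Real.sInf_of_not_bddBelow hA]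
    by_cases hB : BddBelow B
    · refine le_csInf hBne fun b hb => ?_
      by_contra hlt
      push_neg at hlt
      exact (hneg b hb hlt) hB
    · rw [Real.sInf_of_not_bddBelow hB]

/-- **Equation (22).** Any code for the projected source `J_τ(X^T_{[π',P]})`
can be used for the full BIA `X^T_{[π',P]}` source at the cost of at most `τ D_max` extra
distortion per block: `R^E_{X^T_{[π',P]}}((T−τ)D + τ D_max) ≤ R^E_{J_τ(X^T_{[π',P]})}((T−τ)D)`. -/
theorem bia_rd_le_proj_rd
    {𝕏 : Type} [Fintype 𝕏] [DecidableEq 𝕏] (hcard : 2 ≤ Fintype.card 𝕏)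
    (d : 𝕏 → 𝕏 → ℝ) (hdnn : ∀ x y, 0 ≤ d x y)
    (hdiag : ∀ x, d x x = 0) (hdpos : ∀ x y, x ≠ y → 0 < d x y)
    (P : 𝕏 → 𝕏 → ℝ) (hP : IsStochastic P) (hPia : IsIrreducibleAperiodic P)
    (π : 𝕏 → ℝ) (hπ : IsProbDist π) (hπstat : IsStationaryDist P π)
    (π' : 𝕏 → ℝ) (hπ' : IsProbDist π')
    (τ T : ℕ) (hτ : 0 < τ) (hτT : τ < T)
    (D : ℝ) (hD : 0 < D) :
    biaRDE π' P d T (((T : ℝ) - (τ : ℝ)) * D + (τ : ℝ) * Dmax d) ≤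
      projRDE π' P d T τ (((T : ℝ) - (τ : ℝ)) * D) := by
  have hq0 : ∀ s, 0 ≤ markovLaw π' P T s := my_markovLaw_nonneg π' P hπ'.1 hP.1 T
  have hq1 : ∑ s, markovLaw π' P T s = 1 := my_sum_markovLaw P hP.2 T π' hπ'.2
  have hq'0 : ∀ r, 0 ≤ projDist (markovLaw π' P T) τ r :=
    my_projDist_nonneg _ hq0 τ
  have hq'1 : ∑ r, projDist (markovLaw π' P T) τ r = 1 := by
    rw [my_sum_projDist]; exact hq1
  obtain ⟨x0⟩ : Nonempty 𝕏 := Fintype.card_pos_iff.mp (by omega)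
  haveI : Nonempty 𝕏 := ⟨x0⟩
  have hDmax0 : 0 ≤ Dmax d := by
    have := my_dmax_le d x0 x0; rw [hdiag] at this; exact this
  have hiid0 : ∀ (n : ℕ) (x : Fin n → (Fin T → 𝕏)), 0 ≤ iidLaw (markovLaw π' P T) n x :=
    fun n x => Finset.prod_nonneg fun i _ => hq0 _
  have hiid'0 : ∀ (n : ℕ) (y : Fin n → (Fin (T - τ) → 𝕏)),
      0 ≤ iidLaw (projDist (markovLaw π' P T) τ) n y :=
    fun n y => Finset.prod_nonneg fun i _ => hq'0 _
  have hiid1 : ∀ n : ℕ, ∑ x : Fin n → (Fin T → 𝕏), iidLaw (markovLaw π' P T) n x = 1 :=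
    my_sum_iidLaw _ hq1
  have hiid'1 : ∀ n : ℕ, ∑ y : Fin n → (Fin (T - τ) → 𝕏),
      iidLaw (projDist (markovLaw π' P T) τ) n y = 1 :=
    my_sum_iidLaw _ hq'1
  have hbd0 : ∀ (m : ℕ) (a b : Fin m → 𝕏), 0 ≤ blockDist d m a b :=
    fun m a b => Finset.sum_nonneg fun j _ => hdnn _ _
  have hbdC : ∀ (m : ℕ) (a b : Fin m → 𝕏), blockDist d m a b ≤ (m : ℝ) * Dmax d := by
    intro m a b
    calc blockDist d m a b ≤ ∑ _j : Fin m, Dmax d :=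
          Finset.sum_le_sum fun j _ => my_dmax_le d _ _
      _ = (m : ℝ) * Dmax d := by
          rw [Finset.sum_const, Finset.card_univ, Fintype.card_fin, nsmul_eq_mul]
  refine my_sInf_le_sInf _ _ ?_ ?_ ?_
  · -- any code for the projected source yields a code for the BIA source
    rintro R ⟨encP, decP, hlimv⟩
    refine ⟨fun n x => encP n (Jmap T τ ∘ x),
      fun n k i j => if h : (j : ℕ) < τ then x0
        else decP n k i ⟨(j : ℕ) - τ, by have := j.isLt; omega⟩, ?_⟩
    have hpt : ∀ n : ℕ,
        (∑ x : Fin n → (Fin T → 𝕏), iidLaw (markovLaw π' P T) n x *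
          ((n : ℝ)⁻¹ * ∑ i, blockDist d T (x i)
            (fun j => if h : (j : ℕ) < τ then x0
              else decP n (encP n (Jmap T τ ∘ x)) i ⟨(j : ℕ) - τ, by have := j.isLt; omega⟩)))
        ≤ (τ : ℝ) * Dmax d +
          (∑ y : Fin n → (Fin (T - τ) → 𝕏), iidLaw (projDist (markovLaw π' P T) τ) n y *
            ((n : ℝ)⁻¹ * ∑ i, blockDist d (T - τ) (y i) (decP n (encP n y) i))) := by
      intro n
      cases n with
      | zero =>
        simp only [Nat.cast_zero, inv_zero, zero_mul, mul_zero, Finset.sum_const_zero,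
          add_zero]
        exact mul_nonneg (Nat.cast_nonneg τ) hDmax0
      | succ m =>
        have hN : ((m + 1 : ℕ) : ℝ) ≠ 0 := Nat.cast_ne_zero.2 (Nat.succ_ne_zero m)
        calc (∑ x : Fin (m + 1) → (Fin T → 𝕏), iidLaw (markovLaw π' P T) (m + 1) x *
              (((m + 1 : ℕ) : ℝ)⁻¹ * ∑ i, blockDist d T (x i)
                (fun j => if h : (j : ℕ) < τ then x0
                  else decP (m + 1) (encP (m + 1) (Jmap T τ ∘ x)) i
                    ⟨(j : ℕ) - τ, by have := j.isLt; omega⟩)))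
            ≤ ∑ x : Fin (m + 1) → (Fin T → 𝕏), iidLaw (markovLaw π' P T) (m + 1) x *
              (((m + 1 : ℕ) : ℝ)⁻¹ * ∑ i, ((τ : ℝ) * Dmax d +
                blockDist d (T - τ) ((Jmap T τ ∘ x) i)
                  (decP (m + 1) (encP (m + 1) (Jmap T τ ∘ x)) i))) := by
              refine Finset.sum_le_sum fun x _ => ?_
              refine mul_le_mul_of_nonneg_left ?_ (hiid0 _ x)
              refine mul_le_mul_of_nonneg_left ?_ (by positivity)
              refine Finset.sum_le_sum fun i _ => ?_
              exact my_blockBound d hdiag T τ hτT x0 (x i)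
                (decP (m + 1) (encP (m + 1) (Jmap T τ ∘ x)) i)
          _ = ∑ x : Fin (m + 1) → (Fin T → 𝕏), iidLaw (markovLaw π' P T) (m + 1) x *
              ((τ : ℝ) * Dmax d + ((m + 1 : ℕ) : ℝ)⁻¹ * ∑ i, blockDist d (T - τ)
                ((Jmap T τ ∘ x) i) (decP (m + 1) (encP (m + 1) (Jmap T τ ∘ x)) i)) := by
              refine Finset.sum_congr rfl fun x _ => ?_
              congr 1
              rw [Finset.sum_add_distrib, Finset.sum_const, Finset.card_univ,
                Fintype.card_fin, nsmul_eq_mul, mul_add, ← mul_assoc,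
                inv_mul_cancel₀ hN, one_mul]
          _ = (τ : ℝ) * Dmax d + ∑ x : Fin (m + 1) → (Fin T → 𝕏),
              iidLaw (markovLaw π' P T) (m + 1) x *
              (((m + 1 : ℕ) : ℝ)⁻¹ * ∑ i, blockDist d (T - τ)
                ((Jmap T τ ∘ x) i) (decP (m + 1) (encP (m + 1) (Jmap T τ ∘ x)) i)) := by
              simp_rw [mul_add]
              rw [Finset.sum_add_distrib, ← Finset.sum_mul, hiid1 (m + 1), one_mul]
          _ = (τ : ℝ) * Dmax d + (∑ y : Fin (m + 1) → (Fin (T - τ) → 𝕏),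
              iidLaw (projDist (markovLaw π' P T) τ) (m + 1) y *
              (((m + 1 : ℕ) : ℝ)⁻¹ * ∑ i, blockDist d (T - τ) (y i)
                (decP (m + 1) (encP (m + 1) y) i))) := by
              congr 1
              have hp := my_push (Jmap T τ) (markovLaw π' P T) (m + 1)
                (fun y => ((m + 1 : ℕ) : ℝ)⁻¹ * ∑ i, blockDist d (T - τ) (y i)
                  (decP (m + 1) (encP (m + 1) y) i))
              have hq'eq : ∀ y : Fin (m + 1) → (Fin (T - τ) → 𝕏),
                  iidLaw (projDist (markovLaw π' P T) τ) (m + 1) y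
                    = ∏ i, ∑ s : Fin T → 𝕏,
                        if Jmap T τ s = y i then markovLaw π' P T s else 0 :=
                fun y => Finset.prod_congr rfl fun i _ => my_projDist_eq _ τ (y i)
              simp_rw [hq'eq]
              exact hp.symm
    refine le_trans (Filter.limsup_le_limsup (Filter.Eventually.of_forall hpt) ?_ ?_) ?_
    · refine Filter.IsBoundedUnder.isCoboundedUnder_le (Filter.isBoundedUnder_of ⟨0, fun n => ?_⟩)
      exact Finset.sum_nonneg fun x _ => mul_nonneg (hiid0 n x)
        (mul_nonneg (by positivity) (Finset.sum_nonneg fun i _ => hbd0 _ _ _))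
    · refine Filter.isBoundedUnder_of ⟨(τ : ℝ) * Dmax d + ((T - τ : ℕ) : ℝ) * Dmax d,
        fun n => add_le_add_right ?_ _⟩
      refine my_exp_le _ (hiid'0 n) (hiid'1 n) _ _ fun y => ?_
      exact my_avg_le _ _ (mul_nonneg (Nat.cast_nonneg _) hDmax0) fun i => hbdC _ _ _
    · rw [limsup_const_add Filter.atTop
        (fun n : ℕ => ∑ y : Fin n → (Fin (T - τ) → 𝕏),
          iidLaw (projDist (markovLaw π' P T) τ) n y *
            ((n : ℝ)⁻¹ * ∑ i, blockDist d (T - τ) (y i) (decP n (encP n y) i)))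
        ((τ : ℝ) * Dmax d)
        (Filter.isBoundedUnder_of ⟨((T - τ : ℕ) : ℝ) * Dmax d, fun n =>
          my_exp_le _ (hiid'0 n) (hiid'1 n) _ _ fun y =>
            my_avg_le _ _ (mul_nonneg (Nat.cast_nonneg _) hDmax0) fun i => hbdC _ _ _⟩)
        (Filter.IsBoundedUnder.isCoboundedUnder_le (Filter.isBoundedUnder_of ⟨0, fun n =>
          Finset.sum_nonneg fun y _ => mul_nonneg (hiid'0 n y)
            (mul_nonneg (by positivity) (Finset.sum_nonneg fun i _ => hbd0 _ _ _))⟩))]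
      have := hlimv
      linarith
  · -- the set of achievable rates for the projected source is nonempty
    refine ⟨((Fintype.card (Fin (T - τ) → 𝕏) : ℕ) : ℝ), ?_⟩
    have hcard : ∀ n : ℕ, Fintype.card (Fin n → (Fin (T - τ) → 𝕏))
        ≤ Fintype.card (Fin (2 ^ ⌊(n : ℝ) *
            ((Fintype.card (Fin (T - τ) → 𝕏) : ℕ) : ℝ)⌋₊)) := by
      intro n
      have hfl : ⌊(n : ℝ) * ((Fintype.card (Fin (T - τ) → 𝕏) : ℕ) : ℝ)⌋₊
          = n * Fintype.card (Fin (T - τ) → 𝕏) := by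
        rw [← Nat.cast_mul, Nat.floor_natCast]
      rw [Fintype.card_fun, Fintype.card_fin, Fintype.card_fin, hfl]
      calc Fintype.card (Fin (T - τ) → 𝕏) ^ n
          ≤ (2 ^ Fintype.card (Fin (T - τ) → 𝕏)) ^ n :=
            Nat.pow_le_pow_left (Nat.lt_two_pow_self).le n
        _ = 2 ^ (n * Fintype.card (Fin (T - τ) → 𝕏)) := by rw [← pow_mul, mul_comm]
    have hXne : Nonempty 𝕏 := Fintype.card_pos_iff.mp (by omega)
    haveI := hXne
    have hemb : ∀ n : ℕ, Nonempty ((Fin n → (Fin (T - τ) → 𝕏)) ↪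
        Fin (2 ^ ⌊(n : ℝ) * ((Fintype.card (Fin (T - τ) → 𝕏) : ℕ) : ℝ)⌋₊)) :=
      fun n => Function.Embedding.nonempty_iff_card_le.2 (hcard n)
    refine ⟨fun n x => (hemb n).some x, fun n => Function.invFun ⇑((hemb n).some), ?_⟩
    have hz : (fun n : ℕ => ∑ x : Fin n → (Fin (T - τ) → 𝕏),
        iidLaw (projDist (markovLaw π' P T) τ) n x * ((n : ℝ)⁻¹ *
          ∑ i, blockDist d (T - τ) (x i)
            (Function.invFun ⇑((hemb n).some) ((hemb n).some x) i)))
        = fun _ : ℕ => (0 : ℝ) := by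
      funext n
      refine Finset.sum_eq_zero fun x _ => ?_
      rw [Function.leftInverse_invFun ((hemb n).some).injective x]
      have hb : ∑ i : Fin n, blockDist d (T - τ) (x i) (x i) = 0 :=
        Finset.sum_eq_zero fun i _ => Finset.sum_eq_zero fun j _ => hdiag _
      rw [hb, mul_zero, mul_zero]
    show Filter.limsup (fun n : ℕ => ∑ x : Fin n → (Fin (T - τ) → 𝕏),
        iidLaw (projDist (markovLaw π' P T) τ) n x * ((n : ℝ)⁻¹ *
          ∑ i, blockDist d (T - τ) (x i)
            (Function.invFun ⇑((hemb n).some) ((hemb n).some x) i))) Filter.atTop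
        ≤ ((T : ℝ) - (τ : ℝ)) * D
    rw [hz, Filter.limsup_const]
    have h1 : (0 : ℝ) < (T : ℝ) - (τ : ℝ) := by
      have h2 : (τ : ℝ) < (T : ℝ) := by exact_mod_cast hτT
      linarith
    exact (mul_pos h1 hD).le
  · -- a negative achievable rate would make the rate set unbounded below
    rintro R ⟨enc, dec, hlimv⟩ hRneg ⟨c, hc⟩
    have hfl : ∀ n : ℕ, ⌊(n : ℝ) * R⌋₊ = 0 := fun n =>
      Nat.floor_of_nonpos (mul_nonpos_of_nonneg_of_nonpos (Nat.cast_nonneg n) hRneg.le)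
    have hsub : ∀ (n : ℕ) (k k' : Fin (2 ^ ⌊(n : ℝ) * R⌋₊)), k = k' := by
      intro n k k'
      have hone : (2 : ℕ) ^ ⌊(n : ℝ) * R⌋₊ = 1 := by rw [hfl n, pow_zero]
      have h1 : (k : ℕ) < 1 := lt_of_lt_of_eq k.isLt hone
      have h2 : (k' : ℕ) < 1 := lt_of_lt_of_eq k'.isLt hone
      exact Fin.ext (by omega)
    have hmem : ∃ enc' : ∀ n : ℕ, (Fin n → (Fin (T - τ) → 𝕏)) →
          Fin (2 ^ ⌊(n : ℝ) * (c - 1)⌋₊),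
        ∃ dec' : ∀ n : ℕ, Fin (2 ^ ⌊(n : ℝ) * (c - 1)⌋₊) → (Fin n → (Fin (T - τ) → 𝕏)),
        Filter.limsup (fun n : ℕ => ∑ x : Fin n → (Fin (T - τ) → 𝕏),
          iidLaw (projDist (markovLaw π' P T) τ) n x * ((n : ℝ)⁻¹ *
            ∑ i, blockDist d (T - τ) (x i) (dec' n (enc' n x) i))) Filter.atTop
          ≤ ((T : ℝ) - (τ : ℝ)) * D := by
      refine ⟨fun n _ => ⟨0, by positivity⟩, fun n _ => dec n ⟨0, by positivity⟩, ?_⟩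
      have he : (fun n : ℕ => ∑ x : Fin n → (Fin (T - τ) → 𝕏),
          iidLaw (projDist (markovLaw π' P T) τ) n x * ((n : ℝ)⁻¹ *
            ∑ i, blockDist d (T - τ) (x i)
              (dec n (⟨0, by positivity⟩ : Fin (2 ^ ⌊(n : ℝ) * R⌋₊)) i)))
          = (fun n : ℕ => ∑ x : Fin n → (Fin (T - τ) → 𝕏),
          iidLaw (projDist (markovLaw π' P T) τ) n x * ((n : ℝ)⁻¹ *
            ∑ i, blockDist d (T - τ) (x i) (dec n (enc n x) i))) := by
        funext n
        refine Finset.sum_congr rfl fun x _ => ?_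
        exact congrArg (fun k => iidLaw (projDist (markovLaw π' P T) τ) n x * ((n : ℝ)⁻¹ *
          ∑ i, blockDist d (T - τ) (x i) (dec n k i))) (hsub n _ (enc n x))
      show Filter.limsup (fun n : ℕ => ∑ x : Fin n → (Fin (T - τ) → 𝕏),
          iidLaw (projDist (markovLaw π' P T) τ) n x * ((n : ℝ)⁻¹ *
            ∑ i, blockDist d (T - τ) (x i)
              (dec n (⟨0, by positivity⟩ : Fin (2 ^ ⌊(n : ℝ) * R⌋₊)) i))) Filter.atTop
          ≤ ((T : ℝ) - (τ : ℝ)) * D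
      rw [he]
      exact hlimv
    exact absurd (hc hmem) (by linarith)
end

section
/- For every probability distribution π' on 𝕏, every 0 < τ < T, and every D > 0, the operational rate-distortion functions satisfy R^E_{J_τ(X^T_{[π',P]})}(TD) ≤ R^E_{X^T_{[π',P]}}(TD). -/
open Filter Finset

/-! ### Auxiliary lemmas for the proof -/

section Aux

open Filter Finset

lemma markovLaw_nonneg' {𝕏 : Type} {π' : 𝕏 → ℝ} {P : 𝕏 → 𝕏 → ℝ}
    (hπ' : ∀ x, 0 ≤ π' x) (hP : ∀ x y, 0 ≤ P x y) :
    ∀ (n : ℕ) (x : Fin n → 𝕏), 0 ≤ markovLaw π' P n x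
  | 0, _ => zero_le_one
  | _ + 1, _ => mul_nonneg (hπ' _) (Finset.prod_nonneg fun _ _ => hP _ _)

lemma markovLaw_snoc' {𝕏 : Type} (π' : 𝕏 → ℝ) (P : 𝕏 → 𝕏 → ℝ) (n : ℕ)
    (y : Fin (n + 1) → 𝕏) (a : 𝕏) :
    markovLaw π' P (n + 2) (Fin.snoc y a) =
      markovLaw π' P (n + 1) y * P (y (Fin.last n)) a := by
  show π' _ * _ = (π' _ * _) * _
  rw [Fin.prod_univ_castSucc]
  have h0 : (Fin.snoc y a : Fin (n+2) → 𝕏) 0 = y 0 := by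
    rw [← Fin.castSucc_zero, Fin.snoc_castSucc]
  simp [Fin.snoc_castSucc, Fin.snoc_last, Fin.succ_last, Fin.succ_castSucc, mul_assoc, h0, -Fin.castSucc_succ]

lemma markovLaw_sum' {𝕏 : Type} [Fintype 𝕏] {π' : 𝕏 → ℝ} {P : 𝕏 → 𝕏 → ℝ}
    (hπ' : ∑ x, π' x = 1) (hP : ∀ x, ∑ y, P x y = 1) (n : ℕ) :
    ∑ x : Fin n → 𝕏, markovLaw π' P n x = 1 := by
  induction n with
  | zero => simp [markovLaw]
  | succ n ih =>
    cases n with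
    | zero =>
      rw [Fintype.sum_equiv (Equiv.funUnique (Fin 1) 𝕏)
        (fun x : Fin 1 → 𝕏 => markovLaw π' P 1 x) (fun a => π' a)
        (fun x => by simp [markovLaw, Equiv.funUnique])]
      exact hπ'
    | succ m =>
      rw [← Fintype.sum_equiv (Fin.snocEquiv (fun _ : Fin (m+2) => 𝕏))
        (fun p : 𝕏 × (Fin (m+1) → 𝕏) => markovLaw π' P (m+1) p.2 * P (p.2 (Fin.last m)) p.1)
        (fun x : Fin (m+2) → 𝕏 => markovLaw π' P (m+2) x)
        (fun p => (markovLaw_snoc' π' P m p.2 p.1).symm)]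
      rw [Fintype.sum_prod_type_right]
      calc ∑ y : Fin (m+1) → 𝕏, ∑ a : 𝕏, markovLaw π' P (m+1) y * P (y (Fin.last m)) a
          = ∑ y : Fin (m+1) → 𝕏, markovLaw π' P (m+1) y * ∑ a, P (y (Fin.last m)) a := by
            simp [Finset.mul_sum]
        _ = 1 := by simp [hP]; exact ih

/-- The defining set of rates whose infimum is `RDE`. -/
def RDset {S T : Type} [Fintype S]
    (law : ∀ n : ℕ, (Fin n → S) → ℝ) (ρ : S → T → ℝ) (D : ℝ) : Set ℝ :=
  {R : ℝ |
    ∃ enc : ∀ n : ℕ, (Fin n → S) → Fin (2 ^ ⌊(n : ℝ) * R⌋₊),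
    ∃ dec : ∀ n : ℕ, Fin (2 ^ ⌊(n : ℝ) * R⌋₊) → (Fin n → T),
      Filter.limsup (fun n : ℕ =>
        ∑ x : Fin n → S, law n x * ((n : ℝ)⁻¹ *
          ∑ i, ρ (x i) (dec n (enc n x) i))) Filter.atTop ≤ D}

lemma RDset_nonpos_mem {S T : Type} [Fintype S]
    (law : ∀ n : ℕ, (Fin n → S) → ℝ) (ρ : S → T → ℝ) (Δ : ℝ)
    {R R' : ℝ} (hR0 : R ≤ 0) (hR'0 : R' ≤ 0) (h : R ∈ RDset law ρ Δ) :
    R' ∈ RDset law ρ Δ := by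
  obtain ⟨enc, dec, hlim⟩ := h
  have key : ∀ n : ℕ, (2 : ℕ) ^ ⌊(n : ℝ) * R⌋₊ = 2 ^ ⌊(n : ℝ) * R'⌋₊ := by
    intro n
    rw [Nat.floor_of_nonpos, Nat.floor_of_nonpos]
    all_goals exact mul_nonpos_iff.mpr (Or.inl ⟨Nat.cast_nonneg n, by assumption⟩)
  refine ⟨fun n x => Fin.cast (key n) (enc n x),
    fun n c => dec n (Fin.cast (key n).symm c), ?_⟩
  have hc : ∀ (n : ℕ) (x : Fin n → S),
      Fin.cast (key n).symm (Fin.cast (key n) (enc n x)) = enc n x :=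
    fun n x => Fin.ext rfl
  simpa only [hc] using hlim

lemma RDset_card_mem {S : Type} [Fintype S] [Nonempty S]
    (law : ∀ n : ℕ, (Fin n → S) → ℝ) (ρ : S → S → ℝ) (hρ : ∀ s, ρ s s = 0)
    (Δ : ℝ) (hΔ : 0 ≤ Δ) : (Fintype.card S : ℝ) ∈ RDset law ρ Δ := by
  classical
  have hcard : ∀ n : ℕ, Fintype.card (Fin n → S) ≤
      Fintype.card (Fin (2 ^ ⌊(n : ℝ) * (Fintype.card S : ℝ)⌋₊)) := by
    intro n
    rw [Fintype.card_fin, ← Nat.cast_mul, Nat.floor_natCast, Fintype.card_fun,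
      Fintype.card_fin]
    calc Fintype.card S ^ n ≤ (2 ^ Fintype.card S) ^ n :=
          Nat.pow_le_pow_left Nat.lt_two_pow_self.le n
      _ = 2 ^ (n * Fintype.card S) := by rw [← pow_mul, mul_comm]
  have he : ∀ n : ℕ, Nonempty ((Fin n → S) ↪
      Fin (2 ^ ⌊(n : ℝ) * (Fintype.card S : ℝ)⌋₊)) :=
    fun n => Function.Embedding.nonempty_of_card_le (hcard n)
  let e : ∀ n : ℕ, (Fin n → S) ↪ Fin (2 ^ ⌊(n : ℝ) * (Fintype.card S : ℝ)⌋₊) :=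
    fun n => (he n).some
  refine ⟨fun n => e n, fun n c => Function.invFun (e n) c, ?_⟩
  show Filter.limsup (fun n : ℕ =>
      ∑ x : Fin n → S, law n x * ((n : ℝ)⁻¹ *
        ∑ i : Fin n, ρ (x i) (Function.invFun (e n) (e n x) i))) Filter.atTop ≤ Δ
  have hz : (fun n : ℕ =>
      ∑ x : Fin n → S, law n x * ((n : ℝ)⁻¹ *
        ∑ i : Fin n, ρ (x i) (Function.invFun (e n) (e n x) i))) = fun _ : ℕ => (0:ℝ) := by
    funext n
    refine Finset.sum_eq_zero fun x _ => ?_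
    rw [Function.leftInverse_invFun (e n).injective x]
    simp [hρ]
  rw [hz, Filter.limsup_const]
  exact hΔ

lemma RDset_transfer {S S' : Type} [Fintype S] [Fintype S'] [Nonempty S] [DecidableEq S']
    (q : S → ℝ) (hq0 : ∀ s, 0 ≤ q s) (hq1 : ∑ s, q s = 1)
    (ρ : S → S → ℝ) (ρ' : S' → S' → ℝ)
    (hρ'0 : ∀ a b, 0 ≤ ρ' a b)
    (J : S → S') (hJ : Function.Surjective J)
    (hcontr : ∀ a b, ρ' (J a) (J b) ≤ ρ a b)
    (q' : S' → ℝ) (hq' : ∀ r, q' r = ∑ s, if J s = r then q s else 0)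
    (Δ R : ℝ) (hR : R ∈ RDset (iidLaw q) ρ Δ) :
    R ∈ RDset (iidLaw q') ρ' Δ := by
  classical
  obtain ⟨enc, dec, hlim⟩ := hR
  set F : ∀ n : ℕ, (Fin n → S) → ℝ :=
    fun n s => ∑ i, ρ' (J (s i)) (J (dec n (enc n s) i)) with hF
  have hmin : ∀ (n : ℕ) (x : Fin n → S'), ∃ s : Fin n → S,
      (∀ i, J (s i) = x i) ∧ ∀ s' : Fin n → S, (∀ i, J (s' i) = x i) → F n s ≤ F n s' := by
    intro n x
    have hne : (Finset.univ.filter (fun s : Fin n → S => ∀ i, J (s i) = x i)).Nonempty := by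
      refine ⟨fun i => (hJ (x i)).choose, ?_⟩
      simp only [Finset.mem_filter, Finset.mem_univ, true_and]
      exact fun i => (hJ (x i)).choose_spec
    obtain ⟨s, hs, hm⟩ := Finset.exists_min_image _ (F n) hne
    simp only [Finset.mem_filter, Finset.mem_univ, true_and] at hs
    exact ⟨s, hs, fun s' hs' => hm s' (by simp [Finset.mem_filter, hs'])⟩
  choose L hL1 hL2 using hmin
  refine ⟨fun n x => enc n (L n x), fun n c i => J (dec n c i), ?_⟩
  have hq'0 : ∀ r, 0 ≤ q' r := by
    intro r; rw [hq' r]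
    exact Finset.sum_nonneg fun s _ => by by_cases h : J s = r <;> simp [h, hq0 s]
  show Filter.limsup (fun n : ℕ =>
      ∑ x : Fin n → S', iidLaw q' n x * ((n : ℝ)⁻¹ *
        ∑ i, ρ' (x i) (J (dec n (enc n (L n x)) i)))) Filter.atTop ≤ Δ
  have hpoint : ∀ n : ℕ,
      (∑ x : Fin n → S', iidLaw q' n x * ((n : ℝ)⁻¹ *
        ∑ i, ρ' (x i) (J (dec n (enc n (L n x)) i))))
      ≤ ∑ s : Fin n → S, iidLaw q n s * ((n : ℝ)⁻¹ *
        ∑ i, ρ (s i) (dec n (enc n s) i)) := by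
    intro n
    have hexp : ∀ x : Fin n → S',
        (∏ i, q' (x i)) = ∑ g : Fin n → S,
          if (fun i => J (g i)) = x then ∏ i, q (g i) else 0 := by
      intro x
      calc ∏ i, q' (x i) = ∏ i : Fin n, ∑ s : S, if J s = x i then q s else 0 :=
            Finset.prod_congr rfl fun i _ => hq' (x i)
        _ = ∑ g : Fin n → S, ∏ i, if J (g i) = x i then q (g i) else 0 :=
            Fintype.prod_sum _
        _ = _ := by
            refine Finset.sum_congr rfl fun g _ => ?_
            by_cases h : (fun i => J (g i)) = x
            · have h' : ∀ i, J (g i) = x i := fun i => congrFun h i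
              rw [if_pos h]
              exact Finset.prod_congr rfl fun i _ => if_pos (h' i)
            · rw [if_neg h]
              obtain ⟨i, hi⟩ : ∃ i, ¬ J (g i) = x i := by
                by_contra hc; push_neg at hc; exact h (funext hc)
              exact Finset.prod_eq_zero (Finset.mem_univ i) (if_neg hi)
    calc (∑ x : Fin n → S', iidLaw q' n x * ((n : ℝ)⁻¹ *
            ∑ i, ρ' (x i) (J (dec n (enc n (L n x)) i))))
        = ∑ x : Fin n → S', ∑ g : Fin n → S,
            (if (fun i => J (g i)) = x then ∏ i, q (g i) else 0) *
              ((n : ℝ)⁻¹ * F n (L n x)) := by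
          refine Finset.sum_congr rfl fun x _ => ?_
          have hxF : (∑ i, ρ' (x i) (J (dec n (enc n (L n x)) i))) = F n (L n x) :=
            Finset.sum_congr rfl fun i _ => by rw [← hL1 n x i]
          rw [hxF, iidLaw, hexp x, Finset.sum_mul]
      _ ≤ ∑ x : Fin n → S', ∑ g : Fin n → S,
            (if (fun i => J (g i)) = x then (∏ i, q (g i)) * ((n : ℝ)⁻¹ * F n g) else 0) := by
          refine Finset.sum_le_sum fun x _ => Finset.sum_le_sum fun g _ => ?_
          by_cases h : (fun i => J (g i)) = x
          · rw [if_pos h, if_pos h]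
            refine mul_le_mul_of_nonneg_left ?_ (Finset.prod_nonneg fun i _ => hq0 _)
            refine mul_le_mul_of_nonneg_left ?_ (by positivity)
            exact hL2 n x g fun i => congrFun h i
          · rw [if_neg h, if_neg h, zero_mul]
      _ = ∑ g : Fin n → S, (∏ i, q (g i)) * ((n : ℝ)⁻¹ * F n g) := by
          rw [Finset.sum_comm]
          refine Finset.sum_congr rfl fun g _ => ?_
          rw [Finset.sum_ite_eq Finset.univ (fun i => J (g i))
            (fun _ => (∏ i, q (g i)) * ((n : ℝ)⁻¹ * F n g)), if_pos (Finset.mem_univ _)]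
      _ ≤ _ := by
          refine Finset.sum_le_sum fun g _ => ?_
          refine mul_le_mul_of_nonneg_left ?_ (Finset.prod_nonneg fun i _ => hq0 _)
          refine mul_le_mul_of_nonneg_left ?_ (by positivity)
          exact Finset.sum_le_sum fun i _ => hcontr _ _
  set B : ℝ := max (Finset.univ.sup' Finset.univ_nonempty (fun p : S × S => ρ p.1 p.2)) 0
    with hBdef
  have hρB : ∀ a b : S, ρ a b ≤ B := fun a b =>
    le_max_of_le_left (Finset.le_sup' (fun p : S × S => ρ p.1 p.2) (Finset.mem_univ (a, b)))
  have hB0 : (0:ℝ) ≤ B := le_max_right _ _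
  have hiid1 : ∀ n : ℕ, ∑ s : Fin n → S, ∏ i, q (s i) = 1 := by
    intro n
    have := Fintype.sum_pow q n
    rw [hq1, one_pow] at this
    exact this.symm
  have hEle : ∀ n : ℕ, (∑ s : Fin n → S, iidLaw q n s * ((n : ℝ)⁻¹ *
      ∑ i, ρ (s i) (dec n (enc n s) i))) ≤ B := by
    intro n
    have hv : ∀ s : Fin n → S,
        (n : ℝ)⁻¹ * (∑ i, ρ (s i) (dec n (enc n s) i)) ≤ B := by
      intro s
      rcases Nat.eq_zero_or_pos n with h | h
      · subst h; simpa using hB0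
      · have h2 : (0:ℝ) < (n:ℝ) := by exact_mod_cast h
        have h1 : (∑ i : Fin n, ρ (s i) (dec n (enc n s) i)) ≤ (n : ℝ) * B := by
          calc (∑ i : Fin n, ρ (s i) (dec n (enc n s) i))
              ≤ ∑ _i : Fin n, B := Finset.sum_le_sum fun i _ => hρB _ _
            _ = (n : ℝ) * B := by simp [mul_comm]
        calc (n : ℝ)⁻¹ * (∑ i, ρ (s i) (dec n (enc n s) i))
            ≤ (n : ℝ)⁻¹ * ((n : ℝ) * B) := mul_le_mul_of_nonneg_left h1 (by positivity)
          _ = B := by field_simp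
    calc (∑ s : Fin n → S, iidLaw q n s * ((n : ℝ)⁻¹ *
          ∑ i, ρ (s i) (dec n (enc n s) i)))
        ≤ ∑ s : Fin n → S, iidLaw q n s * B :=
          Finset.sum_le_sum fun s _ => mul_le_mul_of_nonneg_left (hv s)
            (Finset.prod_nonneg fun i _ => hq0 _)
      _ = 1 * B := by rw [← Finset.sum_mul]; rw [show ∑ s : Fin n → S, iidLaw q n s
            = ∑ s : Fin n → S, ∏ i, q (s i) from rfl, hiid1 n]
      _ = B := one_mul B
  have hE'0 : ∀ n : ℕ, (0:ℝ) ≤ ∑ x : Fin n → S', iidLaw q' n x * ((n : ℝ)⁻¹ *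
      ∑ i, ρ' (x i) (J (dec n (enc n (L n x)) i))) := by
    intro n
    refine Finset.sum_nonneg fun x _ => mul_nonneg
      (Finset.prod_nonneg fun i _ => hq'0 _)
      (mul_nonneg (by positivity) (Finset.sum_nonneg fun i _ => hρ'0 _ _))
  refine le_trans (Filter.limsup_le_limsup (Filter.Eventually.of_forall hpoint) ?_ ?_) hlim
  · exact Filter.IsBoundedUnder.isCoboundedUnder_le (Filter.isBoundedUnder_of ⟨0, hE'0⟩)
  · exact Filter.isBoundedUnder_of ⟨B, hEle⟩

/-- The projection map `J_τ`. -/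
def Jproj {𝕏 : Type} (T τ : ℕ) (s : Fin T → 𝕏) : Fin (T - τ) → 𝕏 :=
  fun i => s ⟨τ + i.val, by have := i.isLt; omega⟩

lemma Jproj_surjective {𝕏 : Type} [Nonempty 𝕏] (T τ : ℕ) :
    Function.Surjective (Jproj (𝕏 := 𝕏) T τ) := by
  intro r
  obtain ⟨x0⟩ := ‹Nonempty 𝕏›
  refine ⟨fun j => if h : τ ≤ j.val then r ⟨j.val - τ, by have := j.isLt; omega⟩ else x0, ?_⟩
  funext i
  show (if h : τ ≤ τ + i.val then r ⟨τ + i.val - τ, _⟩ else x0) = r i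
  rw [dif_pos (Nat.le_add_right τ i.val)]
  congr 1
  exact Fin.ext (by simp)

lemma projDist_eq' {𝕏 : Type} [Fintype 𝕏] [DecidableEq 𝕏] {T : ℕ}
    (q : (Fin T → 𝕏) → ℝ) (τ : ℕ) (r : Fin (T - τ) → 𝕏) :
    projDist q τ r = ∑ s : Fin T → 𝕏, if Jproj T τ s = r then q s else 0 := by
  unfold projDist
  refine Finset.sum_congr rfl fun s _ => ?_
  refine if_congr ?_ rfl rfl
  constructor
  · intro h; funext i; exact h i
  · intro h i; exact congrFun h i

end Aux

/-- **Equation (23).** The operational rate-distortion function of the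
projected source is at most that of the full BIA source:
`R^E_{J_τ(X^T_{[π',P]})}(TD) ≤ R^E_{X^T_{[π',P]}}(TD)`. -/
theorem proj_rd_le_bia_rd
    {𝕏 : Type} [Fintype 𝕏] [DecidableEq 𝕏] (hcard : 2 ≤ Fintype.card 𝕏)
    (d : 𝕏 → 𝕏 → ℝ) (hdnn : ∀ x y, 0 ≤ d x y)
    (hdiag : ∀ x, d x x = 0) (hdpos : ∀ x y, x ≠ y → 0 < d x y)
    (P : 𝕏 → 𝕏 → ℝ) (hP : IsStochastic P) (hPia : IsIrreducibleAperiodic P)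
    (π : 𝕏 → ℝ) (hπ : IsProbDist π) (hπstat : IsStationaryDist P π)
    (π' : 𝕏 → ℝ) (hπ' : IsProbDist π')
    (τ T : ℕ) (hτ : 0 < τ) (hτT : τ < T)
    (D : ℝ) (hD : 0 < D) :
    projRDE π' P d T τ ((T : ℝ) * D) ≤ biaRDE π' P d T ((T : ℝ) * D) := by
  classical
  haveI hX : Nonempty 𝕏 := Fintype.card_pos_iff.mp (by omega)
  have hTD : (0:ℝ) ≤ (T : ℝ) * D := by positivity
  have hcontr : ∀ a b : Fin T → 𝕏,
      blockDist d (T - τ) (Jproj T τ a) (Jproj T τ b) ≤ blockDist d T a b := by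
    intro a b
    have inj : Function.Injective
        (fun i : Fin (T - τ) => (⟨τ + i.val, by have := i.isLt; omega⟩ : Fin T)) := by
      intro i j h
      have := congrArg Fin.val h
      simp only [] at this
      exact Fin.ext (by omega)
    calc blockDist d (T - τ) (Jproj T τ a) (Jproj T τ b)
        = ∑ j ∈ Finset.univ.map ⟨_, inj⟩, d (a j) (b j) := by
          rw [Finset.sum_map]; rfl
      _ ≤ ∑ j : Fin T, d (a j) (b j) := Finset.sum_le_sum_of_subset_of_nonneg
          (Finset.subset_univ _) (fun j _ _ => hdnn _ _)
      _ = blockDist d T a b := rfl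
  show sInf (RDset (iidLaw (projDist (markovLaw π' P T) τ)) (blockDist d (T - τ))
      ((T : ℝ) * D)) ≤
    sInf (RDset (iidLaw (markovLaw π' P T)) (blockDist d T) ((T : ℝ) * D))
  set Abia := RDset (iidLaw (markovLaw π' P T)) (blockDist d T) ((T : ℝ) * D) with hA
  set Bproj := RDset (iidLaw (projDist (markovLaw π' P T) τ)) (blockDist d (T - τ))
      ((T : ℝ) * D) with hB
  have hsub : Abia ⊆ Bproj := fun R hR =>
    RDset_transfer (markovLaw π' P T) (markovLaw_nonneg' hπ'.1 hP.1 T)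
      (markovLaw_sum' hπ'.2 hP.2 T) (blockDist d T) (blockDist d (T - τ))
      (fun a b => Finset.sum_nonneg fun j _ => hdnn _ _)
      (Jproj T τ) (Jproj_surjective T τ) hcontr
      (projDist (markovLaw π' P T) τ) (projDist_eq' (markovLaw π' P T) τ)
      ((T : ℝ) * D) R hR
  have hAmem : (Fintype.card (Fin T → 𝕏) : ℝ) ∈ Abia :=
    RDset_card_mem _ _ (fun s => by simp [blockDist, hdiag]) _ hTD
  have hAne : Abia.Nonempty := ⟨_, hAmem⟩
  by_cases hBb : BddBelow Bproj
  · exact csInf_le_csInf hBb hAne hsub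
  · rw [Real.sInf_of_not_bddBelow hBb]
    by_contra hneg
    push_neg at hneg
    by_cases hAb : BddBelow Abia
    · obtain ⟨a, haA, ha0⟩ := exists_lt_of_csInf_lt hAne hneg
      obtain ⟨b, hb⟩ := hAb
      have hmem : (min b 0 - 1) ∈ Abia :=
        RDset_nonpos_mem _ _ _ ha0.le (by have := min_le_right b 0; linarith) haA
      have h1 : b ≤ min b 0 - 1 := hb hmem
      have h2 : min b 0 - 1 < b := by have := min_le_left b 0; linarith
      linarith
    · rw [Real.sInf_of_not_bddBelow hAb] at hneg
      linarith
end

section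
/- For every probability distribution π' on 𝕏, every fixed τ ≥ 1, and every D > 0, whenever T is large enough that TD > τ D_max, the following chain of inequalities holds: R^E_{J_τ(X^T_{[π',P]})}(TD) ≤ R^E_{X^T_{[π',P]}}(TD) ≤ R^E_{J_τ(X^T_{[π',P]})}(TD − τ D_max). -/
open Filter Finset

namespace BiaSandwich

open Filter Finset

variable {𝕏 : Type} [Fintype 𝕏] [DecidableEq 𝕏]

/-- The set of achievable rates whose infimum is `RDE`. -/
def Ach {S T : Type} [Fintype S]
    (law : ∀ n : ℕ, (Fin n → S) → ℝ) (ρ : S → T → ℝ) (D : ℝ) : Set ℝ :=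
  {R : ℝ |
    ∃ enc : ∀ n : ℕ, (Fin n → S) → Fin (2 ^ ⌊(n : ℝ) * R⌋₊),
    ∃ dec : ∀ n : ℕ, Fin (2 ^ ⌊(n : ℝ) * R⌋₊) → (Fin n → T),
      Filter.limsup (fun n : ℕ =>
        ∑ x : Fin n → S, law n x * ((n : ℝ)⁻¹ *
          ∑ i, ρ (x i) (dec n (enc n x) i))) Filter.atTop ≤ D}

theorem RDE_eq {S T : Type} [Fintype S] (law : ∀ n : ℕ, (Fin n → S) → ℝ)
    (ρ : S → T → ℝ) (D : ℝ) : RDE law ρ D = sInf (Ach law ρ D) := rfl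

theorem mem_Ach_of_floor_eq {S T : Type} [Fintype S]
    {law : ∀ n : ℕ, (Fin n → S) → ℝ} {ρ : S → T → ℝ} {D : ℝ} {R R' : ℝ}
    (h : ∀ n : ℕ, ⌊(n : ℝ) * R⌋₊ = ⌊(n : ℝ) * R'⌋₊)
    (hR : R ∈ Ach law ρ D) : R' ∈ Ach law ρ D := by
  obtain ⟨enc, dec, hlim⟩ := hR
  have h2 : ∀ n : ℕ, 2 ^ ⌊(n : ℝ) * R⌋₊ = 2 ^ ⌊(n : ℝ) * R'⌋₊ := fun n => by rw [h n]
  refine ⟨fun n x => Fin.cast (h2 n) (enc n x),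
    fun n j => dec n (Fin.cast (h2 n).symm j), ?_⟩
  have heq : ∀ (n : ℕ) (x : Fin n → S),
      dec n (Fin.cast (h2 n).symm (Fin.cast (h2 n) (enc n x))) = dec n (enc n x) := by
    intro n x
    congr 1
    all_goals apply Fin.ext
    all_goals simp
  simpa only [heq] using hlim

theorem neg_mem_Ach {S T : Type} [Fintype S]
    {law : ∀ n : ℕ, (Fin n → S) → ℝ} {ρ : S → T → ℝ} {D : ℝ} {R R' : ℝ}
    (hR : R ∈ Ach law ρ D) (h1 : R < 0) (h2 : R' < 0) : R' ∈ Ach law ρ D := by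
  refine mem_Ach_of_floor_eq (fun n => ?_) hR
  have hR0 : (n : ℝ) * R ≤ 0 := mul_nonpos_of_nonneg_of_nonpos (Nat.cast_nonneg n) h1.le
  have hR'0 : (n : ℝ) * R' ≤ 0 := mul_nonpos_of_nonneg_of_nonpos (Nat.cast_nonneg n) h2.le
  have e1 : ⌊(n : ℝ) * R⌋₊ = 0 := Nat.floor_eq_zero.2 (by linarith)
  have e2 : ⌊(n : ℝ) * R'⌋₊ = 0 := Nat.floor_eq_zero.2 (by linarith)
  rw [e1, e2]

theorem card_mem_Ach {S : Type} [Fintype S] [Nonempty S]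
    (law : ∀ n : ℕ, (Fin n → S) → ℝ) (ρ : S → S → ℝ) (hρ : ∀ s, ρ s s = 0)
    {D : ℝ} (hD : 0 ≤ D) : (Fintype.card S : ℝ) ∈ Ach law ρ D := by
  set c := Fintype.card S with hc
  have hfloor : ∀ n : ℕ, ⌊(n : ℝ) * (c : ℝ)⌋₊ = n * c := fun n => by
    rw [← Nat.cast_mul, Nat.floor_natCast]
  have hcard : ∀ n : ℕ, Fintype.card (Fin n → S) ≤ Fintype.card (Fin (2 ^ ⌊(n : ℝ) * (c : ℝ)⌋₊)) := by
    intro n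
    rw [Fintype.card_fun, Fintype.card_fin, Fintype.card_fin, hfloor n]
    calc c ^ n ≤ (2 ^ c) ^ n := Nat.pow_le_pow_left (Nat.lt_two_pow_self (n := c)).le n
      _ = 2 ^ (c * n) := (pow_mul 2 c n).symm
      _ = 2 ^ (n * c) := by rw [Nat.mul_comm]
  have hemb : ∀ n : ℕ, ∃ f : (Fin n → S) → Fin (2 ^ ⌊(n : ℝ) * (c : ℝ)⌋₊),
      Function.Injective f := fun n => by
    obtain ⟨f⟩ := Function.Embedding.nonempty_of_card_le (hcard n)
    exact ⟨f, f.injective⟩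
  choose enc hinj using hemb
  refine ⟨enc, fun n => Function.invFun (enc n), ?_⟩
  have hz : (fun n : ℕ => ∑ x : Fin n → S, law n x * ((n : ℝ)⁻¹ *
      ∑ i, ρ (x i) (Function.invFun (enc n) (enc n x) i))) = fun _ => (0 : ℝ) := by
    funext n
    apply Finset.sum_eq_zero
    intro x _
    rw [Function.leftInverse_invFun (hinj n) x]
    simp [hρ]
  rw [hz, Filter.limsup_const]
  exact hD

theorem sInf_le_sInf_of_subset (A B : Set ℝ) (hBA : B ⊆ A) (hBne : B.Nonempty)
    (hBneg : ∀ R ∈ B, R < 0 → ∀ R' : ℝ, R' < 0 → R' ∈ B) : sInf A ≤ sInf B := by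
  by_cases hA : BddBelow A
  · exact csInf_le_csInf hA hBne hBA
  · rw [csInf_of_not_bddBelow hA, Real.sInf_empty]
    by_cases hneg : ∃ R ∈ B, R < 0
    · obtain ⟨R, hRB, hRneg⟩ := hneg
      have hnb : ¬ BddBelow B := by
        rintro ⟨m, hm⟩
        have hmem : min m 0 - 1 ∈ B := hBneg R hRB hRneg _
          (by have := min_le_right m (0 : ℝ); linarith)
        have := hm hmem
        have := min_le_left m (0 : ℝ)
        linarith
      rw [csInf_of_not_bddBelow hnb, Real.sInf_empty]
    · push_neg at hneg
      exact Real.sInf_nonneg hneg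

/-! ### Law facts -/

theorem markovLaw_nonneg {π' : 𝕏 → ℝ} {P : 𝕏 → 𝕏 → ℝ}
    (hπ' : ∀ x, 0 ≤ π' x) (hP : ∀ x y, 0 ≤ P x y) (n : ℕ) (x : Fin n → 𝕏) :
    0 ≤ markovLaw π' P n x := by
  cases n with
  | zero => exact zero_le_one
  | succ m => exact mul_nonneg (hπ' _) (Finset.prod_nonneg fun i _ => hP _ _)

theorem markovLaw_snoc (π' : 𝕏 → ℝ) (P : 𝕏 → 𝕏 → ℝ) (n : ℕ) (y : Fin (n + 1) → 𝕏) (z : 𝕏) :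
    markovLaw π' P (n + 2) (Fin.snoc y z) = markovLaw π' P (n + 1) y * P (y (Fin.last n)) z := by
  set w : Fin (n + 2) → 𝕏 := Fin.snoc y z with hw
  show π' (w 0) * ∏ i : Fin (n + 1), P (w i.castSucc) (w i.succ)
    = (π' (y 0) * ∏ i : Fin n, P (y i.castSucc) (y i.succ)) * P (y (Fin.last n)) z
  rw [Fin.prod_univ_castSucc]
  have h0 : w 0 = y 0 := by
    rw [show (0 : Fin (n + 2)) = Fin.castSucc 0 from rfl, hw, Fin.snoc_castSucc]
  have hcs : ∀ j : Fin (n + 1), w j.castSucc = y j := fun j => by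
    rw [hw, Fin.snoc_castSucc]
  have hfac : ∀ i : Fin n,
      P (w (i.castSucc).castSucc) (w (i.castSucc).succ)
        = P (y i.castSucc) (y i.succ) := by
    intro i
    rw [hcs, Fin.succ_castSucc, hcs]
  have hlastfac : P (w (Fin.last n).castSucc) (w (Fin.last n).succ)
      = P (y (Fin.last n)) z := by
    rw [hcs, Fin.succ_last, hw, Fin.snoc_last]
  rw [h0, hlastfac, Finset.prod_congr rfl (fun i _ => hfac i)]
  ring

theorem sum_markovLaw (π' : 𝕏 → ℝ) (P : 𝕏 → 𝕏 → ℝ)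
    (hπ' : ∑ x, π' x = 1) (hP : ∀ x, ∑ y, P x y = 1) (n : ℕ) :
    ∑ x : Fin n → 𝕏, markovLaw π' P n x = 1 := by
  cases n with
  | zero => simp [markovLaw]
  | succ m =>
    induction m with
    | zero =>
      rw [← (Fin.snocEquiv (fun _ : Fin 1 => 𝕏)).sum_comp
        (fun x => markovLaw π' P 1 x)]
      simp only [Fintype.sum_prod_type]
      have : ∀ (a : 𝕏) (b : Fin 0 → 𝕏),
          markovLaw π' P 1 (Fin.snocEquiv (fun _ : Fin 1 => 𝕏) (a, b)) = π' a := by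
        intro a b
        set w : Fin 1 → 𝕏 := Fin.snoc b a with hw
        show π' (w 0) * ∏ i : Fin 0, P (w i.castSucc) (w i.succ) = π' a
        rw [Finset.univ_eq_empty, Finset.prod_empty, mul_one]
        have hw0 : w 0 = a := by
          rw [hw, show (0 : Fin 1) = Fin.last 0 from rfl, Fin.snoc_last]
        rw [hw0]
      simp only [this]
      simp [hπ']
    | succ k ih =>
      rw [← (Fin.snocEquiv (fun _ : Fin (k + 2) => 𝕏)).sum_comp
        (fun x => markovLaw π' P (k + 2) x)]
      simp only [Fintype.sum_prod_type]
      have hsnoc : ∀ (a : 𝕏) (b : Fin (k + 1) → 𝕏),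
          markovLaw π' P (k + 2) (Fin.snocEquiv (fun _ : Fin (k + 2) => 𝕏) (a, b))
            = markovLaw π' P (k + 1) b * P (b (Fin.last k)) a := by
        intro a b
        exact markovLaw_snoc π' P k b a
      simp only [hsnoc]
      rw [Finset.sum_comm]
      have : ∀ b : Fin (k + 1) → 𝕏,
          ∑ a : 𝕏, markovLaw π' P (k + 1) b * P (b (Fin.last k)) a
            = markovLaw π' P (k + 1) b := by
        intro b
        rw [← Finset.mul_sum, hP, mul_one]
      simp only [this]
      exact ih

theorem iidLaw_nonneg {S : Type} [Fintype S] {q : S → ℝ} (hq : ∀ s, 0 ≤ q s)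
    (n : ℕ) (x : Fin n → S) : 0 ≤ iidLaw q n x :=
  Finset.prod_nonneg fun i _ => hq _

theorem sum_iidLaw {S : Type} [Fintype S] [DecidableEq S] (q : S → ℝ) (hq : ∑ s, q s = 1)
    (n : ℕ) : ∑ x : Fin n → S, iidLaw q n x = 1 := by
  unfold iidLaw
  rw [← Fintype.piFinset_univ, ← Finset.prod_univ_sum]
  simp [hq]

/-! ### Suffix and extension maps -/

def sfx (T τ : ℕ) (s : Fin T → 𝕏) : Fin (T - τ) → 𝕏 :=
  fun i => s ⟨τ + i.val, by have := i.isLt; omega⟩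

def embτ (T τ : ℕ) : Fin (T - τ) ↪ Fin T :=
  ⟨fun i => ⟨τ + i.val, by have := i.isLt; omega⟩, by
    intro a b hab
    apply Fin.ext
    have := Fin.mk.injEq (τ + a.val) _ (τ + b.val) _ ▸ hab
    simpa using congrArg Fin.val hab⟩

def extb (T τ : ℕ) (x0 : 𝕏) (r : Fin (T - τ) → 𝕏) : Fin T → 𝕏 :=
  fun j => if h : τ ≤ j.val then r ⟨j.val - τ, by have := j.isLt; omega⟩ else x0

theorem sfx_extb (T τ : ℕ) (x0 : 𝕏) (r : Fin (T - τ) → 𝕏) :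
    sfx T τ (extb T τ x0 r) = r := by
  funext i
  simp only [sfx, extb]
  rw [dif_pos (Nat.le_add_right τ i.val)]
  congr 1
  apply Fin.ext
  simp

theorem projDist_eq {T : ℕ} (q : (Fin T → 𝕏) → ℝ) (τ : ℕ) (r : Fin (T - τ) → 𝕏) :
    projDist q τ r = ∑ s ∈ univ.filter (fun s => sfx T τ s = r), q s := by
  rw [Finset.sum_filter]
  refine Finset.sum_congr rfl (fun s _ => ?_)
  refine if_congr ?_ rfl rfl
  exact (funext_iff (f := sfx T τ s) (g := r)).symm

theorem projDist_nonneg {T : ℕ} {q : (Fin T → 𝕏) → ℝ} (hq : ∀ s, 0 ≤ q s) (τ : ℕ)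
    (r : Fin (T - τ) → 𝕏) : 0 ≤ projDist q τ r := by
  rw [projDist_eq]; exact Finset.sum_nonneg fun s _ => hq s

theorem sum_projDist {T : ℕ} (q : (Fin T → 𝕏) → ℝ) (τ : ℕ) :
    ∑ r, projDist q τ r = ∑ s, q s := by
  simp_rw [projDist_eq]
  exact Finset.sum_fiberwise _ _ _

theorem piFinset_fiber_eq (T τ n : ℕ) (x : Fin n → (Fin (T - τ) → 𝕏)) :
    Fintype.piFinset (fun i => univ.filter (fun t : Fin T → 𝕏 => sfx T τ t = x i))
      = univ.filter (fun g : Fin n → (Fin T → 𝕏) => (fun i => sfx T τ (g i)) = x) := by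
  ext g
  simp [Fintype.mem_piFinset, funext_iff]

theorem iidLaw_projDist {T : ℕ} (q : (Fin T → 𝕏) → ℝ) (τ n : ℕ)
    (y : Fin n → (Fin (T - τ) → 𝕏)) :
    iidLaw (projDist q τ) n y
      = ∑ g ∈ univ.filter (fun g : Fin n → (Fin T → 𝕏) => (fun i => sfx T τ (g i)) = y),
          iidLaw q n g := by
  unfold iidLaw
  simp_rw [projDist_eq]
  rw [Finset.prod_univ_sum, piFinset_fiber_eq]

/-! ### Distortion estimates -/

theorem blockDist_nonneg {d : 𝕏 → 𝕏 → ℝ} (hdnn : ∀ x y, 0 ≤ d x y) (k : ℕ)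
    (s t : Fin k → 𝕏) : 0 ≤ blockDist d k s t :=
  Finset.sum_nonneg fun _ _ => hdnn _ _

theorem blockDist_self {d : 𝕏 → 𝕏 → ℝ} (hdiag : ∀ x, d x x = 0) (k : ℕ)
    (s : Fin k → 𝕏) : blockDist d k s s = by exact 0 := by
  unfold blockDist
  simp [hdiag]

theorem blockDist_le {d : 𝕏 → 𝕏 → ℝ} {c : ℝ} (hdmax : ∀ x y, d x y ≤ c) (k : ℕ)
    (s t : Fin k → 𝕏) : blockDist d k s t ≤ (k : ℝ) * c := by
  unfold blockDist
  calc ∑ j, d (s j) (t j) ≤ ∑ _j : Fin k, c := Finset.sum_le_sum fun j _ => hdmax _ _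
    _ = (k : ℝ) * c := by simp [mul_comm]

theorem blockDist_sfx_le {d : 𝕏 → 𝕏 → ℝ} (hdnn : ∀ x y, 0 ≤ d x y) {T τ : ℕ}
    (u v : Fin T → 𝕏) :
    blockDist d (T - τ) (sfx T τ u) (sfx T τ v) ≤ blockDist d T u v := by
  unfold blockDist
  have h1 : ∑ i : Fin (T - τ), d (sfx T τ u i) (sfx T τ v i)
      = ∑ j ∈ univ.map (embτ T τ), d (u j) (v j) := by
    rw [Finset.sum_map]
    rfl
  rw [h1]
  exact Finset.sum_le_sum_of_subset_of_nonneg (Finset.subset_univ _) (fun j _ _ => hdnn _ _)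

theorem map_embτ (T τ : ℕ) :
    (univ : Finset (Fin (T - τ))).map (embτ T τ)
      = univ.filter (fun j : Fin T => τ ≤ j.val) := by
  ext j
  simp only [Finset.mem_map, Finset.mem_univ, true_and, Finset.mem_filter, embτ,
    Function.Embedding.coeFn_mk]
  constructor
  · rintro ⟨i, rfl⟩
    exact Nat.le_add_right _ _
  · intro h
    refine ⟨⟨j.val - τ, by have := j.isLt; omega⟩, ?_⟩
    apply Fin.ext
    show τ + (j.val - τ) = j.val
    omega

theorem card_filter_lt (T τ : ℕ) (h : τ ≤ T) :
    (univ.filter (fun j : Fin T => ¬ τ ≤ j.val)).card = τ := by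
  have he : univ.filter (fun j : Fin T => ¬ τ ≤ j.val) = univ.map (Fin.castLEEmb h) := by
    ext j
    simp only [Finset.mem_filter, Finset.mem_univ, true_and, Finset.mem_map,
      Fin.castLEEmb, Fin.castLE, Function.Embedding.coeFn_mk, not_le]
    constructor
    · intro hj
      exact ⟨⟨j.val, hj⟩, rfl⟩
    · rintro ⟨a, rfl⟩
      exact a.isLt
  rw [he]
  simp

theorem le_Dmax [Nonempty 𝕏] (d : 𝕏 → 𝕏 → ℝ) (x y : 𝕏) : d x y ≤ Dmax d := by
  unfold Dmax
  exact le_ciSup (f := fun p : 𝕏 × 𝕏 => d p.1 p.2)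
    (Set.Finite.bddAbove (Set.finite_range _)) (⟨x, y⟩ : 𝕏 × 𝕏)

theorem blockDist_extb_le {d : 𝕏 → 𝕏 → ℝ} (hdnn : ∀ x y, 0 ≤ d x y)
    (hdmax : ∀ x y, d x y ≤ Dmax d) {T τ : ℕ} (h : τ ≤ T) (x0 : 𝕏)
    (u : Fin T → 𝕏) (v : Fin (T - τ) → 𝕏) :
    blockDist d T u (extb T τ x0 v) ≤ (τ : ℝ) * Dmax d + blockDist d (T - τ) (sfx T τ u) v := by
  unfold blockDist
  rw [← Finset.sum_filter_add_sum_filter_not univ (fun j : Fin T => τ ≤ j.val)]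
  have hA : ∑ j ∈ univ.filter (fun j : Fin T => τ ≤ j.val), d (u j) (extb T τ x0 v j)
      = ∑ i : Fin (T - τ), d (sfx T τ u i) (v i) := by
    rw [← map_embτ, Finset.sum_map]
    refine Finset.sum_congr rfl fun i _ => ?_
    congr 1
    show extb T τ x0 v (embτ T τ i) = v i
    simp only [extb, embτ, Function.Embedding.coeFn_mk]
    show (if h : τ ≤ τ + i.val then v ⟨τ + i.val - τ, by have := i.isLt; omega⟩ else x0) = v i
    rw [dif_pos (Nat.le_add_right τ i.val)]
    congr 1
    apply Fin.ext
    simp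
  have hB : ∑ j ∈ univ.filter (fun j : Fin T => ¬ τ ≤ j.val), d (u j) (extb T τ x0 v j)
      ≤ (τ : ℝ) * Dmax d := by
    calc ∑ j ∈ univ.filter (fun j : Fin T => ¬ τ ≤ j.val), d (u j) (extb T τ x0 v j)
        ≤ ∑ _j ∈ univ.filter (fun j : Fin T => ¬ τ ≤ j.val), Dmax d := by
          haveI : Nonempty 𝕏 := ⟨x0⟩
          exact Finset.sum_le_sum fun j _ => hdmax _ _
      _ = (τ : ℝ) * Dmax d := by
          rw [Finset.sum_const, card_filter_lt T τ h, nsmul_eq_mul]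
  rw [hA]
  linarith

/-! ### Small analytic helpers -/

theorem inv_nat_mul_le_one (n : ℕ) : (n : ℝ)⁻¹ * (n : ℝ) ≤ 1 := by
  rcases Nat.eq_zero_or_pos n with hn | hn
  · subst hn; simp
  · have hn' : (0 : ℝ) < n := by exact_mod_cast hn
    rw [inv_mul_cancel₀ hn'.ne']

theorem inv_mul_sum_le {n : ℕ} {g : Fin n → ℝ} {c : ℝ} (hc : 0 ≤ c) (h : ∀ i, g i ≤ c) :
    (n : ℝ)⁻¹ * ∑ i, g i ≤ c := by
  have hsum : ∑ i, g i ≤ (n : ℝ) * c := by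
    calc ∑ i, g i ≤ ∑ _i : Fin n, c := Finset.sum_le_sum fun i _ => h i
      _ = (n : ℝ) * c := by simp [mul_comm]
  have h1 : (n : ℝ)⁻¹ * ∑ i, g i ≤ (n : ℝ)⁻¹ * ((n : ℝ) * c) :=
    mul_le_mul_of_nonneg_left hsum (inv_nonneg.2 (Nat.cast_nonneg n))
  have h2 : (n : ℝ)⁻¹ * ((n : ℝ) * c) ≤ c := by
    rw [← mul_assoc]
    calc (n : ℝ)⁻¹ * (n : ℝ) * c ≤ 1 * c :=
      mul_le_mul_of_nonneg_right (inv_nat_mul_le_one n) hc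
      _ = c := one_mul c
  linarith

theorem sum_weighted_le {S : Type} [Fintype S] {w f : S → ℝ} {c : ℝ}
    (hw : ∀ s, 0 ≤ w s) (hw1 : ∑ s, w s = 1) (hf : ∀ s, f s ≤ c) :
    ∑ s, w s * f s ≤ c := by
  calc ∑ s, w s * f s ≤ ∑ s, w s * c :=
      Finset.sum_le_sum fun s _ => mul_le_mul_of_nonneg_left (hf s) (hw s)
    _ = c := by rw [← Finset.sum_mul, hw1, one_mul]
/-! ### The two code-transfer inclusions -/

theorem ach_bia_subset_proj {d : 𝕏 → 𝕏 → ℝ} (hdnn : ∀ x y, 0 ≤ d x y)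
    (hdmax : ∀ x y, d x y ≤ Dmax d) (hDmax0 : 0 ≤ Dmax d) (x0 : 𝕏)
    (T τ : ℕ) (q : (Fin T → 𝕏) → ℝ) (hqnn : ∀ s, 0 ≤ q s) (hq1 : ∑ s, q s = 1)
    (Δ : ℝ) :
    Ach (iidLaw q) (blockDist d T) Δ ⊆ Ach (iidLaw (projDist q τ)) (blockDist d (T - τ)) Δ := by
  rintro R ⟨enc, dec, hlim⟩
  have hmin : ∀ (n : ℕ) (x : Fin n → (Fin (T - τ) → 𝕏)),
      ∃ s ∈ univ.filter (fun g : Fin n → (Fin T → 𝕏) => (fun i => sfx T τ (g i)) = x),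
        ∀ t ∈ univ.filter (fun g : Fin n → (Fin T → 𝕏) => (fun i => sfx T τ (g i)) = x),
          (∑ i, blockDist d (T - τ) (sfx T τ (s i)) (sfx T τ (dec n (enc n s) i)))
            ≤ ∑ i, blockDist d (T - τ) (sfx T τ (t i)) (sfx T τ (dec n (enc n t) i)) := by
    intro n x
    apply Finset.exists_min_image
    refine ⟨fun i => extb T τ x0 (x i), ?_⟩
    rw [Finset.mem_filter]
    exact ⟨Finset.mem_univ _, by funext i; exact sfx_extb T τ x0 (x i)⟩
  choose ext hextmem hextmin using hmin
  have hfix : ∀ (n : ℕ) (x : Fin n → (Fin (T - τ) → 𝕏)) (i : Fin n),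
      sfx T τ (ext n x i) = x i := by
    intro n x i
    have h := hextmem n x
    rw [Finset.mem_filter] at h
    exact congrFun h.2 i
  refine ⟨fun n x => enc n (ext n x), fun n j i => sfx T τ (dec n j i), ?_⟩
  refine le_trans (Filter.limsup_le_limsup (Filter.Eventually.of_forall ?_) ?_ ?_) hlim
  · -- pointwise comparison
    intro n
    calc ∑ x : Fin n → (Fin (T - τ) → 𝕏), iidLaw (projDist q τ) n x * ((n : ℝ)⁻¹ *
            ∑ i, blockDist d (T - τ) (x i) (sfx T τ (dec n (enc n (ext n x)) i)))
        = ∑ x : Fin n → (Fin (T - τ) → 𝕏),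
            ∑ g ∈ univ.filter (fun g : Fin n → (Fin T → 𝕏) => (fun i => sfx T τ (g i)) = x),
              iidLaw q n g * ((n : ℝ)⁻¹ *
                ∑ i, blockDist d (T - τ) (sfx T τ (ext n x i))
                  (sfx T τ (dec n (enc n (ext n x)) i))) := by
          refine Finset.sum_congr rfl fun x _ => ?_
          have hstep : (∑ i, blockDist d (T - τ) (x i) (sfx T τ (dec n (enc n (ext n x)) i)))
              = ∑ i, blockDist d (T - τ) (sfx T τ (ext n x i))
                  (sfx T τ (dec n (enc n (ext n x)) i)) := by
            refine Finset.sum_congr rfl fun i _ => ?_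
            rw [hfix n x i]
          rw [hstep, iidLaw_projDist, Finset.sum_mul]
      _ ≤ ∑ x : Fin n → (Fin (T - τ) → 𝕏),
            ∑ g ∈ univ.filter (fun g : Fin n → (Fin T → 𝕏) => (fun i => sfx T τ (g i)) = x),
              iidLaw q n g * ((n : ℝ)⁻¹ *
                ∑ i, blockDist d (T - τ) (sfx T τ (g i)) (sfx T τ (dec n (enc n g) i))) := by
          refine Finset.sum_le_sum fun x _ => Finset.sum_le_sum fun g hg => ?_
          refine mul_le_mul_of_nonneg_left
            (mul_le_mul_of_nonneg_left ?_ (inv_nonneg.2 (Nat.cast_nonneg n)))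
            (iidLaw_nonneg hqnn n g)
          exact hextmin n x g hg
      _ = ∑ g : Fin n → (Fin T → 𝕏),
              iidLaw q n g * ((n : ℝ)⁻¹ *
                ∑ i, blockDist d (T - τ) (sfx T τ (g i)) (sfx T τ (dec n (enc n g) i))) :=
          Finset.sum_fiberwise _ _ _
      _ ≤ ∑ g : Fin n → (Fin T → 𝕏),
              iidLaw q n g * ((n : ℝ)⁻¹ * ∑ i, blockDist d T (g i) (dec n (enc n g) i)) := by
          refine Finset.sum_le_sum fun g _ => ?_
          refine mul_le_mul_of_nonneg_left
            (mul_le_mul_of_nonneg_left ?_ (inv_nonneg.2 (Nat.cast_nonneg n)))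
            (iidLaw_nonneg hqnn n g)
          exact Finset.sum_le_sum fun i _ => blockDist_sfx_le hdnn _ _
  · -- coboundedness of the left sequence
    refine isCoboundedUnder_le_of_le Filter.atTop (x := 0) fun n => ?_
    refine Finset.sum_nonneg fun x _ => mul_nonneg
      (iidLaw_nonneg (fun r => projDist_nonneg hqnn τ r) n x)
      (mul_nonneg (inv_nonneg.2 (Nat.cast_nonneg n))
        (Finset.sum_nonneg fun i _ => blockDist_nonneg hdnn _ _ _))
  · -- boundedness of the right sequence
    refine Filter.isBoundedUnder_of ⟨(T : ℝ) * Dmax d, fun n => ?_⟩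
    refine sum_weighted_le (iidLaw_nonneg hqnn n) (sum_iidLaw q hq1 n) fun x => ?_
    exact inv_mul_sum_le (mul_nonneg (Nat.cast_nonneg T) hDmax0)
      (fun i => blockDist_le hdmax T _ _)

theorem ach_proj_subset_bia {d : 𝕏 → 𝕏 → ℝ} (hdnn : ∀ x y, 0 ≤ d x y)
    (hdmax : ∀ x y, d x y ≤ Dmax d) (hDmax0 : 0 ≤ Dmax d) (x0 : 𝕏)
    (T τ : ℕ) (hτT : τ ≤ T)
    (q : (Fin T → 𝕏) → ℝ) (hqnn : ∀ s, 0 ≤ q s) (hq1 : ∑ s, q s = 1) (Δ : ℝ) :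
    Ach (iidLaw (projDist q τ)) (blockDist d (T - τ)) Δ
      ⊆ Ach (iidLaw q) (blockDist d T) (Δ + (τ : ℝ) * Dmax d) := by
  rintro R ⟨enc, dec, hlim⟩
  refine ⟨fun n x => enc n (fun i => sfx T τ (x i)),
    fun n j i => extb T τ x0 (dec n j i), ?_⟩
  set A : ℕ → ℝ := fun n => ∑ y : Fin n → (Fin (T - τ) → 𝕏),
    iidLaw (projDist q τ) n y * ((n : ℝ)⁻¹ *
      ∑ i, blockDist d (T - τ) (y i) (dec n (enc n y) i)) with hA
  have hApt : Filter.limsup A Filter.atTop ≤ Δ := hlim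
  have hq'nn : ∀ r, 0 ≤ projDist q τ r := fun r => projDist_nonneg hqnn τ r
  have hq'1 : ∑ r, projDist q τ r = 1 := by rw [sum_projDist, hq1]
  have hAnn : ∀ n, 0 ≤ A n := by
    intro n
    refine Finset.sum_nonneg fun y _ => mul_nonneg (iidLaw_nonneg hq'nn n y)
      (mul_nonneg (inv_nonneg.2 (Nat.cast_nonneg n))
        (Finset.sum_nonneg fun i _ => blockDist_nonneg hdnn _ _ _))
  have hAbd : ∀ n, A n ≤ ((T - τ : ℕ) : ℝ) * Dmax d := by
    intro n
    refine sum_weighted_le (iidLaw_nonneg hq'nn n) (sum_iidLaw _ hq'1 n) fun y => ?_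
    exact inv_mul_sum_le (mul_nonneg (Nat.cast_nonneg _) hDmax0)
      (fun i => blockDist_le hdmax (T - τ) _ _)
  have hpt : ∀ n : ℕ,
      (∑ x : Fin n → (Fin T → 𝕏), iidLaw q n x * ((n : ℝ)⁻¹ *
        ∑ i, blockDist d T (x i)
          (extb T τ x0 (dec n (enc n (fun i => sfx T τ (x i))) i))))
      ≤ A n + (τ : ℝ) * Dmax d := by
    intro n
    have key : (∑ x : Fin n → (Fin T → 𝕏), iidLaw q n x * ((n : ℝ)⁻¹ *
        ∑ i, blockDist d T (x i)
          (extb T τ x0 (dec n (enc n (fun i => sfx T τ (x i))) i))))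
        ≤ ∑ x : Fin n → (Fin T → 𝕏), iidLaw q n x * ((τ : ℝ) * Dmax d + ((n : ℝ)⁻¹ *
            ∑ i, blockDist d (T - τ) (sfx T τ (x i))
              (dec n (enc n (fun i => sfx T τ (x i))) i))) := by
      refine Finset.sum_le_sum fun x _ =>
        mul_le_mul_of_nonneg_left ?_ (iidLaw_nonneg hqnn n x)
      have h1 : (∑ i, blockDist d T (x i)
            (extb T τ x0 (dec n (enc n (fun i => sfx T τ (x i))) i)))
          ≤ ∑ i : Fin n, ((τ : ℝ) * Dmax d + blockDist d (T - τ) (sfx T τ (x i))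
              (dec n (enc n (fun i => sfx T τ (x i))) i)) :=
        Finset.sum_le_sum fun i _ => blockDist_extb_le hdnn hdmax hτT x0 _ _
      have h2 : (∑ i : Fin n, ((τ : ℝ) * Dmax d + blockDist d (T - τ) (sfx T τ (x i))
            (dec n (enc n (fun i => sfx T τ (x i))) i)))
          = (n : ℝ) * ((τ : ℝ) * Dmax d) + ∑ i, blockDist d (T - τ) (sfx T τ (x i))
              (dec n (enc n (fun i => sfx T τ (x i))) i) := by
        rw [Finset.sum_add_distrib, Finset.sum_const, Finset.card_univ, Fintype.card_fin,
          nsmul_eq_mul]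
      have h3 : (n : ℝ)⁻¹ * (∑ i, blockDist d T (x i)
            (extb T τ x0 (dec n (enc n (fun i => sfx T τ (x i))) i)))
          ≤ (n : ℝ)⁻¹ * ((n : ℝ) * ((τ : ℝ) * Dmax d) + ∑ i, blockDist d (T - τ)
              (sfx T τ (x i)) (dec n (enc n (fun i => sfx T τ (x i))) i)) := by
        refine mul_le_mul_of_nonneg_left ?_ (inv_nonneg.2 (Nat.cast_nonneg n))
        rw [← h2]
        exact h1
      have h5 : (n : ℝ)⁻¹ * (n : ℝ) * ((τ : ℝ) * Dmax d) ≤ 1 * ((τ : ℝ) * Dmax d) :=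
        mul_le_mul_of_nonneg_right (inv_nat_mul_le_one n)
          (mul_nonneg (Nat.cast_nonneg τ) hDmax0)
      have h4 : (n : ℝ)⁻¹ * ((n : ℝ) * ((τ : ℝ) * Dmax d) + ∑ i, blockDist d (T - τ)
            (sfx T τ (x i)) (dec n (enc n (fun i => sfx T τ (x i))) i))
          = (n : ℝ)⁻¹ * (n : ℝ) * ((τ : ℝ) * Dmax d) + (n : ℝ)⁻¹ * ∑ i, blockDist d (T - τ)
            (sfx T τ (x i)) (dec n (enc n (fun i => sfx T τ (x i))) i) := by ring
      linarith
    have split : (∑ x : Fin n → (Fin T → 𝕏), iidLaw q n x * ((τ : ℝ) * Dmax d + ((n : ℝ)⁻¹ *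
          ∑ i, blockDist d (T - τ) (sfx T τ (x i))
            (dec n (enc n (fun i => sfx T τ (x i))) i))))
        = (τ : ℝ) * Dmax d + A n := by
      have hsplit1 : (∑ x : Fin n → (Fin T → 𝕏), iidLaw q n x * ((τ : ℝ) * Dmax d + ((n : ℝ)⁻¹ *
            ∑ i, blockDist d (T - τ) (sfx T τ (x i))
              (dec n (enc n (fun i => sfx T τ (x i))) i))))
          = (∑ x : Fin n → (Fin T → 𝕏), iidLaw q n x * ((τ : ℝ) * Dmax d))
            + ∑ x : Fin n → (Fin T → 𝕏), iidLaw q n x * ((n : ℝ)⁻¹ *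
              ∑ i, blockDist d (T - τ) (sfx T τ (x i))
                (dec n (enc n (fun i => sfx T τ (x i))) i)) := by
        rw [← Finset.sum_add_distrib]
        exact Finset.sum_congr rfl fun x _ => by ring
      rw [hsplit1]
      congr 1
      · rw [← Finset.sum_mul, sum_iidLaw q hq1 n, one_mul]
      · rw [hA]
        rw [← Finset.sum_fiberwise univ
          (fun x : Fin n → (Fin T → 𝕏) => (fun i => sfx T τ (x i)))
          (fun x => iidLaw q n x * ((n : ℝ)⁻¹ *
            ∑ i, blockDist d (T - τ) (sfx T τ (x i))
              (dec n (enc n (fun i => sfx T τ (x i))) i)))]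
        refine Finset.sum_congr rfl fun y _ => ?_
        rw [iidLaw_projDist, Finset.sum_mul]
        refine Finset.sum_congr rfl fun x hx => ?_
        rw [Finset.mem_filter] at hx
        have h2 := hx.2
        have h2' : ∀ i, sfx T τ (x i) = y i := fun i => congrFun h2 i
        simp only [h2, h2']
    calc (∑ x : Fin n → (Fin T → 𝕏), iidLaw q n x * ((n : ℝ)⁻¹ *
          ∑ i, blockDist d T (x i)
            (extb T τ x0 (dec n (enc n (fun i => sfx T τ (x i))) i))))
        ≤ (τ : ℝ) * Dmax d + A n := le_of_le_of_eq key split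
      _ = A n + (τ : ℝ) * Dmax d := add_comm _ _
  have hBnn : ∀ n : ℕ, (0 : ℝ) ≤ ∑ x : Fin n → (Fin T → 𝕏), iidLaw q n x * ((n : ℝ)⁻¹ *
      ∑ i, blockDist d T (x i)
        (extb T τ x0 (dec n (enc n (fun i => sfx T τ (x i))) i))) := by
    intro n
    refine Finset.sum_nonneg fun x _ => mul_nonneg (iidLaw_nonneg hqnn n x)
      (mul_nonneg (inv_nonneg.2 (Nat.cast_nonneg n))
        (Finset.sum_nonneg fun i _ => blockDist_nonneg hdnn _ _ _))
  have h6 := Filter.limsup_le_limsup (Filter.Eventually.of_forall hpt)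
    (isCoboundedUnder_le_of_le Filter.atTop hBnn)
    (Filter.isBoundedUnder_of ⟨((T - τ : ℕ) : ℝ) * Dmax d + (τ : ℝ) * Dmax d,
      fun n => add_le_add_left (hAbd n) _⟩)
  have h7 : Filter.limsup (fun n => A n + (τ : ℝ) * Dmax d) Filter.atTop
      = Filter.limsup A Filter.atTop + (τ : ℝ) * Dmax d :=
    limsup_add_const Filter.atTop A ((τ : ℝ) * Dmax d)
      (Filter.isBoundedUnder_of ⟨((T - τ : ℕ) : ℝ) * Dmax d, hAbd⟩)
      (isCoboundedUnder_le_of_le Filter.atTop hAnn)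
  calc Filter.limsup (fun n : ℕ => ∑ x : Fin n → (Fin T → 𝕏), iidLaw q n x * ((n : ℝ)⁻¹ *
        ∑ i, blockDist d T (x i)
          (extb T τ x0 (dec n (enc n (fun i => sfx T τ (x i))) i)))) Filter.atTop
      ≤ Filter.limsup (fun n => A n + (τ : ℝ) * Dmax d) Filter.atTop := h6
    _ = Filter.limsup A Filter.atTop + (τ : ℝ) * Dmax d := h7
    _ ≤ Δ + (τ : ℝ) * Dmax d := add_le_add_left hApt _
end BiaSandwich


/-- **Equation (26).** Whenever `TD > τ D_max`, the sandwich
`R^E_{J_τ(X^T_{[π',P]})}(TD) ≤ R^E_{X^T_{[π',P]}}(TD) ≤ R^E_{J_τ(X^T_{[π',P]})}(TD − τ D_max)`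
holds. -/
theorem bia_rd_sandwich
    {𝕏 : Type} [Fintype 𝕏] [DecidableEq 𝕏] (hcard : 2 ≤ Fintype.card 𝕏)
    (d : 𝕏 → 𝕏 → ℝ) (hdnn : ∀ x y, 0 ≤ d x y)
    (hdiag : ∀ x, d x x = 0) (hdpos : ∀ x y, x ≠ y → 0 < d x y)
    (P : 𝕏 → 𝕏 → ℝ) (hP : IsStochastic P) (hPia : IsIrreducibleAperiodic P)
    (π : 𝕏 → ℝ) (hπ : IsProbDist π) (hπstat : IsStationaryDist P π)
    (π' : 𝕏 → ℝ) (hπ' : IsProbDist π')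
    (τ : ℕ) (hτ : 1 ≤ τ) (D : ℝ) (hD : 0 < D)
    (T : ℕ) (hτT : τ < T) (hTD : (τ : ℝ) * Dmax d < (T : ℝ) * D) :
    projRDE π' P d T τ ((T : ℝ) * D) ≤ biaRDE π' P d T ((T : ℝ) * D) ∧
      biaRDE π' P d T ((T : ℝ) * D) ≤
        projRDE π' P d T τ ((T : ℝ) * D - (τ : ℝ) * Dmax d) := by
  classical
  have hX : Nonempty 𝕏 := Fintype.card_pos_iff.mp (by omega)
  obtain ⟨x0⟩ := hX
  haveI : Nonempty 𝕏 := ⟨x0⟩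
  have hdmax : ∀ x y, d x y ≤ Dmax d := BiaSandwich.le_Dmax d
  have hDmax0 : 0 ≤ Dmax d := by
    have h := hdmax x0 x0
    rw [hdiag x0] at h
    exact h
  have hqnn : ∀ s : Fin T → 𝕏, 0 ≤ markovLaw π' P T s :=
    fun s => BiaSandwich.markovLaw_nonneg hπ'.1 hP.1 T s
  have hq1 : ∑ s : Fin T → 𝕏, markovLaw π' P T s = 1 :=
    BiaSandwich.sum_markovLaw π' P hπ'.2 hP.2 T
  have hT0 : (0 : ℝ) < T := by
    have h : (0 : ℕ) < T := by omega
    exact_mod_cast h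
  have hTD0 : 0 ≤ (T : ℝ) * D := le_of_lt (mul_pos hT0 hD)
  have hTD1 : 0 ≤ (T : ℝ) * D - (τ : ℝ) * Dmax d := by linarith
  have hdiagT : ∀ s : Fin T → 𝕏, blockDist d T s s = 0 :=
    fun s => BiaSandwich.blockDist_self hdiag T s
  have hdiagT' : ∀ s : Fin (T - τ) → 𝕏, blockDist d (T - τ) s s = 0 :=
    fun s => BiaSandwich.blockDist_self hdiag (T - τ) s
  have hne1 : (BiaSandwich.Ach (iidLaw (markovLaw π' P T)) (blockDist d T)
      ((T : ℝ) * D)).Nonempty :=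
    ⟨_, BiaSandwich.card_mem_Ach _ _ hdiagT hTD0⟩
  have hne2 : (BiaSandwich.Ach (iidLaw (projDist (markovLaw π' P T) τ))
      (blockDist d (T - τ)) ((T : ℝ) * D - (τ : ℝ) * Dmax d)).Nonempty :=
    ⟨_, BiaSandwich.card_mem_Ach _ _ hdiagT' hTD1⟩
  constructor
  · refine BiaSandwich.sInf_le_sInf_of_subset _ _
      (BiaSandwich.ach_bia_subset_proj hdnn hdmax hDmax0 x0 T τ (markovLaw π' P T)
        hqnn hq1 ((T : ℝ) * D)) hne1 ?_
    exact fun R hR h1 R' h2 => BiaSandwich.neg_mem_Ach hR h1 h2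
  · have hsub := BiaSandwich.ach_proj_subset_bia hdnn hdmax hDmax0 x0 T τ hτT.le
      (markovLaw π' P T) hqnn hq1 ((T : ℝ) * D - (τ : ℝ) * Dmax d)
    rw [sub_add_cancel] at hsub
    refine BiaSandwich.sInf_le_sInf_of_subset _ _ hsub hne2 ?_
    exact fun R hR h1 R' h2 => BiaSandwich.neg_mem_Ach hR h1 h2
end
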